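/- arXiv:1706.05737 — 4 statements merged into one kernel-verified Lean document; each statement's English description precedes it below -/
import Mathlib

section
/- Suppose the uncertainty set U = {h ∈ ℝ^m : h ≥ 0, R h ≤ r} is nonempty. Then the two-stage adjustable robust problem and its dualized reformulation have equal optimal values: z_AR(B) = z_dAR(B). -/
open Matrix MeasureTheory ProbabilityTheory

/-- Optimal value of the two-stage adjustable robust problem. -/
noncomputable def zAR {m n : ℕ} (U : Set (Fin m → ℝ)) (c d : Fin n → ℝ)
    (A B : Matrix (Fin m) (Fin n) ℝ) : EReal :=
  ⨅ x : {x : Fin n → ℝ // 0 ≤ x},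
    ((c ⬝ᵥ (x : Fin n → ℝ) : ℝ) : EReal) +
      ⨆ h : U,
        ⨅ _y : {y : Fin n → ℝ // 0 ≤ y ∧
            (h : Fin m → ℝ) ≤ A *ᵥ (x : Fin n → ℝ) + B *ᵥ y},
          ((d ⬝ᵥ (_y : Fin n → ℝ) : ℝ) : EReal)

/-- Optimal value of the affine-policy problem. -/
noncomputable def zAff {m n : ℕ} (U : Set (Fin m → ℝ)) (c d : Fin n → ℝ)
    (A B : Matrix (Fin m) (Fin n) ℝ) : EReal :=
  ⨅ p : {p : (Fin n → ℝ) × Matrix (Fin n) (Fin m) ℝ × (Fin n → ℝ) //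
      0 ≤ p.1 ∧ ∀ h ∈ U, 0 ≤ p.2.1 *ᵥ h + p.2.2 ∧
        h ≤ A *ᵥ p.1 + B *ᵥ (p.2.1 *ᵥ h + p.2.2)},
    ((c ⬝ᵥ p.1.1 : ℝ) : EReal) +
      ⨆ h : U, ((d ⬝ᵥ (p.1.2.1 *ᵥ (h : Fin m → ℝ) + p.1.2.2) : ℝ) : EReal)

/-- The polyhedral uncertainty set. -/
def polyU {m L : ℕ} (R : Matrix (Fin L) (Fin m) ℝ) (r : Fin L → ℝ) : Set (Fin m → ℝ) :=
  {h | 0 ≤ h ∧ R *ᵥ h ≤ r}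

/-- The dualized uncertainty set. -/
def dualW {m n : ℕ} (B : Matrix (Fin m) (Fin n) ℝ) (d : Fin n → ℝ) : Set (Fin m → ℝ) :=
  {w | 0 ≤ w ∧ Bᵀ *ᵥ w ≤ d}

/-- Optimal value of the dualized adjustable robust problem. -/
noncomputable def zdAR {m n L : ℕ} (c d : Fin n → ℝ) (A B : Matrix (Fin m) (Fin n) ℝ)
    (R : Matrix (Fin L) (Fin m) ℝ) (r : Fin L → ℝ) : EReal :=
  ⨅ x : {x : Fin n → ℝ // 0 ≤ x},
    ((c ⬝ᵥ (x : Fin n → ℝ) : ℝ) : EReal) +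
      ⨆ w : dualW B d,
        ⨅ l : {l : Fin L → ℝ // 0 ≤ l ∧ (w : Fin m → ℝ) ≤ Rᵀ *ᵥ l},
          ((-(A *ᵥ (x : Fin n → ℝ)) ⬝ᵥ (w : Fin m → ℝ) + r ⬝ᵥ (l : Fin L → ℝ) : ℝ) : EReal)

/-- Optimal value of the dualized affine-policy problem. -/
noncomputable def zdAff {m n L : ℕ} (c d : Fin n → ℝ) (A B : Matrix (Fin m) (Fin n) ℝ)
    (R : Matrix (Fin L) (Fin m) ℝ) (r : Fin L → ℝ) : EReal :=
  ⨅ p : {p : (Fin n → ℝ) × Matrix (Fin L) (Fin m) ℝ × (Fin L → ℝ) //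
      0 ≤ p.1 ∧ ∀ w ∈ dualW B d, 0 ≤ p.2.1 *ᵥ w + p.2.2 ∧
        w ≤ Rᵀ *ᵥ (p.2.1 *ᵥ w + p.2.2)},
    ((c ⬝ᵥ p.1.1 : ℝ) : EReal) +
      ⨆ w : dualW B d,
        ((-(A *ᵥ p.1.1) ⬝ᵥ (w : Fin m → ℝ) + r ⬝ᵥ (p.1.2.1 *ᵥ (w : Fin m → ℝ) + p.1.2.2) : ℝ) : EReal)


variable {ι : Type*} [Fintype ι] [DecidableEq ι]
variable {E : Type*} [NormedAddCommGroup E] [InnerProductSpace ℝ E] [FiniteDimensional ℝ E]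

/-- The conic hull (as a set) of a finite family of vectors. -/
def coneSet (v : ι → E) : Set E := {x | ∃ y : ι → ℝ, 0 ≤ y ∧ ∑ i, y i • v i = x}

lemma cone_rep_indep (v : ι → E) :
    ∀ (k : ℕ) (y : ι → ℝ), (Finset.univ.filter fun i => y i ≠ 0).card ≤ k → 0 ≤ y →
      ∃ z : ι → ℝ, 0 ≤ z ∧ ∑ i, z i • v i = ∑ i, y i • v i ∧
        LinearIndependent ℝ (fun i : (Finset.univ.filter fun i => z i ≠ 0) => v i) := by
  intro k
  induction k with
  | zero =>
    intro y hcard hy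
    refine ⟨y, hy, rfl, ?_⟩
    have h0 : (Finset.univ.filter fun i => y i ≠ 0) = ∅ :=
      Finset.card_eq_zero.mp (Nat.le_zero.mp hcard)
    rw [h0]
    exact linearIndependent_empty_type
  | succ k ih =>
    intro y hcard hy
    set s := (Finset.univ.filter fun i => y i ≠ 0) with hs
    by_cases hli : LinearIndependent ℝ (fun i : s => v i)
    · exact ⟨y, hy, rfl, hli⟩
    · obtain ⟨g, hgsum, j0, hj0⟩ := Fintype.not_linearIndependent_iff.mp hli
      set g' : ι → ℝ := fun i => if h : i ∈ s then g ⟨i, h⟩ else 0 with hg'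
      have hg'supp : ∀ i ∉ s, g' i = 0 := fun i hi => dif_neg hi
      have hg'sum : ∑ i, g' i • v i = 0 := by
        rw [← Finset.sum_subset (Finset.subset_univ s)
          (fun x _ hx => by rw [hg'supp x hx, zero_smul])]
        rw [← Finset.sum_attach s (fun i => g' i • v i)]
        rw [← hgsum]
        refine Finset.sum_congr rfl fun i _ => ?_
        simp [hg', dif_pos i.2]
      have hg'j0 : g' (j0 : ι) ≠ 0 := by
        simpa [hg', dif_pos j0.2] using hj0
      -- get c with a positive coordinate
      obtain ⟨c, hcsupp, hcsum, i1, hci1⟩ :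
          ∃ c : ι → ℝ, (∀ i ∉ s, c i = 0) ∧ ∑ i, c i • v i = 0 ∧ ∃ i, 0 < c i := by
        rcases lt_trichotomy (g' (j0 : ι)) 0 with h | h | h
        · refine ⟨-g', fun i hi => by simp [hg'supp i hi], by simp [hg'sum], j0, by simpa using h⟩
        · exact absurd h hg'j0
        · exact ⟨g', hg'supp, hg'sum, j0, h⟩
      set T := s.filter (fun i => 0 < c i) with hT
      have hi1s : i1 ∈ s := by
        by_contra h; exact absurd (hcsupp i1 h) (ne_of_gt hci1)
      have hTne : T.Nonempty := ⟨i1, Finset.mem_filter.mpr ⟨hi1s, hci1⟩⟩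
      set t := T.inf' hTne (fun i => y i / c i) with ht
      obtain ⟨i0, hi0T, hi0⟩ := Finset.exists_mem_eq_inf' hTne (fun i => y i / c i)
      have hci0 : 0 < c i0 := (Finset.mem_filter.mp hi0T).2
      have hyi0 : 0 ≤ y i0 := hy i0
      have htnn : 0 ≤ t := by
        rw [ht, hi0]
        exact div_nonneg hyi0 hci0.le
      set y' : ι → ℝ := fun i => y i - t * c i with hy'
      have hy'nn : 0 ≤ y' := by
        intro i
        simp only [hy', Pi.zero_apply]
        rcases le_or_gt (c i) 0 with h | h
        · have h2 : t * c i ≤ 0 := mul_nonpos_of_nonneg_of_nonpos htnn h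
          have h3 : 0 ≤ y i := hy i
          linarith
        · have hiT : i ∈ T := Finset.mem_filter.mpr
            ⟨by by_contra hh; exact absurd (hcsupp i hh) (ne_of_gt h), h⟩
          have : t ≤ y i / c i := Finset.inf'_le _ hiT
          rw [le_div_iff₀ h] at this
          linarith
      have hy'sum : ∑ i, y' i • v i = ∑ i, y i • v i := by
        simp only [hy', sub_smul, Finset.sum_sub_distrib, mul_smul]
        rw [← Finset.smul_sum, hcsum, smul_zero, sub_zero]
      have hy'i0 : y' i0 = 0 := by
        simp only [hy']
        rw [ht, hi0]
        field_simp
        ring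
      have hsubset : (Finset.univ.filter fun i => y' i ≠ 0) ⊆ s.erase i0 := by
        intro i hi
        rw [Finset.mem_filter] at hi
        refine Finset.mem_erase.mpr ⟨?_, ?_⟩
        · rintro rfl; exact hi.2 hy'i0
        · by_contra hh
          have h1 : y i = 0 := by simpa [hs] using hh
          have h2 : c i = 0 := hcsupp i hh
          exact hi.2 (by simp [hy', h1, h2])
      have hcard' : (Finset.univ.filter fun i => y' i ≠ 0).card ≤ k := by
        calc (Finset.univ.filter fun i => y' i ≠ 0).card ≤ (s.erase i0).card :=
              Finset.card_le_card hsubset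
          _ = s.card - 1 := Finset.card_erase_of_mem (Finset.mem_filter.mp hi0T).1
          _ ≤ k := by omega
      obtain ⟨z, hz1, hz2, hz3⟩ := ih y' hcard' hy'nn
      exact ⟨z, hz1, hz2.trans hy'sum, hz3⟩

/-- The linear map sending coefficients to the combination. -/
noncomputable def combMap (v : ι → E) : (ι → ℝ) →ₗ[ℝ] E where
  toFun z := ∑ i, z i • v i
  map_add' a b := by simp [add_smul, Finset.sum_add_distrib]
  map_smul' c a := by simp [mul_smul, Finset.smul_sum]

lemma isClosed_coneSet (v : ι → E) : IsClosed (coneSet v) := by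
  have hrep : coneSet v = ⋃ (s : Finset ι),
      ⋃ (_ : LinearIndependent ℝ fun i : s => v (i : ι)),
        (combMap (fun i : s => v (i : ι))) '' {z | 0 ≤ z} := by
    ext x
    constructor
    · rintro ⟨y, hy, rfl⟩
      obtain ⟨z, hz, hzsum, hzli⟩ := cone_rep_indep v
        ((Finset.univ.filter fun i => y i ≠ 0).card) y le_rfl hy
      set s := (Finset.univ.filter fun i => z i ≠ 0) with hs
      refine Set.mem_iUnion.mpr ⟨s, Set.mem_iUnion.mpr ⟨hzli, ⟨fun i => z (i : ι),
        fun i => hz (i : ι), ?_⟩⟩⟩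
      show ∑ i : s, z (i : ι) • v (i : ι) = _
      rw [← hzsum]
      rw [← Finset.sum_subset (Finset.subset_univ s)
        (fun i _ hi => by
          have : z i = 0 := by simpa [hs] using hi
          rw [this, zero_smul])]
      exact Finset.sum_attach s (fun i => z i • v i)
    · intro hx
      obtain ⟨s, hsx⟩ := Set.mem_iUnion.mp hx
      obtain ⟨_, z, hz, rfl⟩ := Set.mem_iUnion.mp hsx
      refine ⟨fun i => if h : i ∈ s then z ⟨i, h⟩ else 0, fun i => ?_, ?_⟩
      · by_cases h : i ∈ s
        · simpa [h] using hz ⟨i, h⟩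
        · simp [h]
      · show _ = ∑ i : s, z i • v (i : ι)
        rw [← Finset.sum_subset (Finset.subset_univ s)
          (fun i _ hi => by simp [dif_neg hi])]
        rw [← Finset.sum_attach s (fun i => (if h : i ∈ s then z ⟨i, h⟩ else 0) • v i)]
        exact Finset.sum_congr rfl fun i _ => by simp [dif_pos i.2]
  rw [hrep]
  refine isClosed_iUnion_of_finite fun s => isClosed_iUnion_of_finite fun hli => ?_
  have hker : LinearMap.ker (combMap (fun i : s => v (i : ι))) = ⊥ := by
    rw [LinearMap.ker_eq_bot']
    intro z hz
    exact funext (Fintype.linearIndependent_iff.mp hli z hz)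
  have hce := LinearMap.isClosedEmbedding_of_injective hker
  refine hce.isClosedMap _ ?_
  have : {z : s → ℝ | 0 ≤ z} = ⋂ i : s, {z : s → ℝ | 0 ≤ z i} := by
    ext z; simp [Pi.le_def]
  rw [this]
  exact isClosed_iInter fun i => isClosed_le continuous_const (continuous_apply i)

open scoped InnerProductSpace in
lemma farkas_cone [CompleteSpace E] (v : ι → E) (b : E) (hb : b ∉ coneSet v) :
    ∃ w : E, (∀ i, 0 ≤ ⟪v i, w⟫_ℝ) ∧ ⟪w, b⟫_ℝ < 0 := by
  set K : ConvexCone ℝ E :=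
    { carrier := coneSet v
      smul_mem' := by
        rintro c hc x ⟨y, hy, rfl⟩
        exact ⟨c • y, fun i => mul_nonneg hc.le (hy i), by
          simp [Finset.smul_sum, mul_smul]⟩
      add_mem' := by
        rintro x ⟨y1, hy1, rfl⟩ x' ⟨y2, hy2, rfl⟩
        exact ⟨y1 + y2, fun i => add_nonneg (hy1 i) (hy2 i), by
          simp [add_smul, Finset.sum_add_distrib]⟩ } with hK
  have hne : (K : Set E).Nonempty := ⟨0, 0, le_rfl, by simp⟩
  have hcl : IsClosed (K : Set E) := isClosed_coneSet v
  obtain ⟨w, hw1, hw2⟩ : ∃ w : E, (∀ x ∈ (K : Set E), 0 ≤ ⟪x, w⟫_ℝ) ∧ ⟪w, b⟫_ℝ < 0 := by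
    let P : ProperCone ℝ E :=
      { carrier := coneSet v
        add_mem' := fun {x x'} hx hx' => K.add_mem' hx hx'
        zero_mem' := ⟨0, le_rfl, by simp⟩
        smul_mem' := by
          rintro c x ⟨y, hy, rfl⟩
          exact ⟨(c : ℝ) • y, fun i => mul_nonneg c.2 (hy i), by
            simp [Finset.smul_sum, mul_smul, NNReal.smul_def]⟩
        isClosed' := hcl }
    obtain ⟨y, h1, h2⟩ := P.hyperplane_separation' (x₀ := b) hb
    exact ⟨y, h1, by rwa [real_inner_comm]⟩
  refine ⟨w, fun i => hw1 (v i) ⟨Pi.single i 1, fun j => by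
    by_cases h : j = i <;> simp [Pi.single_apply, h], ?_⟩, hw2⟩
  rw [Finset.sum_eq_single i (fun j _ hj => by simp [Pi.single_apply, hj])
    (fun h => absurd (Finset.mem_univ i) h)]
  simp

open scoped InnerProductSpace in
lemma farkas_matrix {κ : Type*} [Fintype κ] (M : Matrix κ ι ℝ) (b : κ → ℝ)
    (h : ¬ ∃ y : ι → ℝ, 0 ≤ y ∧ M *ᵥ y = b) :
    ∃ w : κ → ℝ, 0 ≤ Mᵀ *ᵥ w ∧ b ⬝ᵥ w < 0 := by
  classical
  set e := (EuclideanSpace.equiv κ ℝ : EuclideanSpace ℝ κ ≃L[ℝ] (κ → ℝ)) with he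
  set v : ι → EuclideanSpace ℝ κ := fun i => e.symm (fun j => M j i) with hv
  have hb : (e.symm b) ∉ coneSet v := by
    rintro ⟨y, hy, hsum⟩
    refine h ⟨y, hy, ?_⟩
    have := congrArg e hsum
    rw [map_sum] at this
    simp only [_root_.map_smul, ContinuousLinearEquiv.apply_symm_apply, hv] at this
    funext j
    rw [← this]
    simp [Matrix.mulVec, dotProduct, mul_comm]
  obtain ⟨w, hw1, hw2⟩ := farkas_cone v (e.symm b) hb
  refine ⟨e w, fun i => ?_, ?_⟩
  · have h1 := hw1 i
    have h2 : ⟪v i, w⟫_ℝ = (Mᵀ *ᵥ (e w)) i := by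
      simp [hv, PiLp.inner_apply, he, Matrix.mulVec, dotProduct,
        EuclideanSpace.equiv, RCLike.inner_apply, mul_comm]
    rw [h2] at h1
    exact h1
  · have h2 : ⟪w, e.symm b⟫_ℝ = b ⬝ᵥ (e w) := by
      simp [PiLp.inner_apply, he, dotProduct, EuclideanSpace.equiv,
        RCLike.inner_apply, mul_comm]
    rw [h2] at hw2
    exact hw2

section LP

variable {κ : Type*} [Fintype κ] [DecidableEq κ]

lemma dot_le_dot {a a' w : κ → ℝ} (h : a ≤ a') (hw : 0 ≤ w) : a ⬝ᵥ w ≤ a' ⬝ᵥ w :=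
  Finset.sum_le_sum fun j _ => mul_le_mul_of_nonneg_right (h j) (hw j)

lemma dot_nonneg {a w : κ → ℝ} (ha : 0 ≤ a) (hw : 0 ≤ w) : 0 ≤ a ⬝ᵥ w := by
  simpa using dot_le_dot ha hw

lemma farkas_ineq (M : Matrix κ ι ℝ) (b : κ → ℝ)
    (h : ¬ ∃ y : ι → ℝ, 0 ≤ y ∧ M *ᵥ y ≤ b) :
    ∃ u : κ → ℝ, 0 ≤ u ∧ 0 ≤ Mᵀ *ᵥ u ∧ b ⬝ᵥ u < 0 := by
  classical
  set M' : Matrix κ (ι ⊕ κ) ℝ := Matrix.fromCols M 1 with hM'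
  have h' : ¬ ∃ p : ι ⊕ κ → ℝ, 0 ≤ p ∧ M' *ᵥ p = b := by
    rintro ⟨p, hp, hpe⟩
    refine h ⟨p ∘ Sum.inl, fun i => hp (Sum.inl i), ?_⟩
    have : M' *ᵥ p = M *ᵥ (p ∘ Sum.inl) + (p ∘ Sum.inr) := by
      funext j
      simp [hM', Matrix.fromCols, Matrix.mulVec, dotProduct,
        Fintype.sum_sum_type, Matrix.one_apply, Finset.sum_ite_eq']
    rw [this] at hpe
    intro j
    have h1 : 0 ≤ (p ∘ Sum.inr) j := hp (Sum.inr j)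
    have h2 := congrFun hpe j
    simp only [Pi.add_apply] at h2
    linarith
  obtain ⟨w, hw1, hw2⟩ := farkas_matrix M' b h'
  refine ⟨w, fun j => ?_, fun i => ?_, hw2⟩
  · have := hw1 (Sum.inr j)
    simpa [hM', Matrix.fromCols, Matrix.mulVec, dotProduct, Matrix.transpose,
      Matrix.one_apply, Finset.sum_ite_eq] using this
  · have := hw1 (Sum.inl i)
    simpa [hM', Matrix.fromCols, Matrix.mulVec, dotProduct,
      Matrix.transpose] using this

lemma weak_duality {M : Matrix κ ι ℝ} {b : κ → ℝ} {d : ι → ℝ} {y : ι → ℝ} {w : κ → ℝ}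
    (hy : 0 ≤ y) (hby : b ≤ M *ᵥ y) (hw : 0 ≤ w) (hwd : Mᵀ *ᵥ w ≤ d) :
    b ⬝ᵥ w ≤ d ⬝ᵥ y := by
  calc b ⬝ᵥ w ≤ (M *ᵥ y) ⬝ᵥ w := dot_le_dot hby hw
    _ = (Mᵀ *ᵥ w) ⬝ᵥ y := by
        rw [dotProduct_comm, dotProduct_mulVec, Matrix.mulVec_transpose]
    _ ≤ d ⬝ᵥ y := dot_le_dot hwd hy

/-- If the primal `{y ≥ 0 : M y ≥ b}` is infeasible, there is a dual ray. -/
lemma dual_ray {M : Matrix κ ι ℝ} {b : κ → ℝ}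
    (h : ¬ ∃ y : ι → ℝ, 0 ≤ y ∧ b ≤ M *ᵥ y) :
    ∃ u : κ → ℝ, 0 ≤ u ∧ Mᵀ *ᵥ u ≤ 0 ∧ 0 < b ⬝ᵥ u := by
  have h' : ¬ ∃ y : ι → ℝ, 0 ≤ y ∧ (-M) *ᵥ y ≤ -b := by
    rintro ⟨y, hy, hle⟩
    refine h ⟨y, hy, fun j => ?_⟩
    have := hle j
    simp only [Matrix.neg_mulVec, Pi.neg_apply] at this
    linarith
  obtain ⟨u, hu1, hu2, hu3⟩ := farkas_ineq (-M) (-b) h'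
  refine ⟨u, hu1, fun i => ?_, ?_⟩
  · have := hu2 i
    simp only [Matrix.transpose_neg, Matrix.neg_mulVec, Pi.neg_apply, Pi.zero_apply] at this ⊢
    linarith
  · have : (-b) ⬝ᵥ u = -(b ⬝ᵥ u) := by simp [dotProduct]
    rw [this] at hu3
    linarith

end LP

section Strong

variable {κ : Type*} [Fintype κ] [DecidableEq κ]

lemma exists_optimal_pair {M : Matrix κ ι ℝ} {b : κ → ℝ} {d : ι → ℝ}
    (hP : ∃ y : ι → ℝ, 0 ≤ y ∧ b ≤ M *ᵥ y) (hD : ∃ w : κ → ℝ, 0 ≤ w ∧ Mᵀ *ᵥ w ≤ d) :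
    ∃ y w, (0 ≤ y ∧ b ≤ M *ᵥ y) ∧ (0 ≤ w ∧ Mᵀ *ᵥ w ≤ d) ∧ d ⬝ᵥ y ≤ b ⬝ᵥ w := by
  classical
  set N : Matrix (κ ⊕ (ι ⊕ Fin 1)) (ι ⊕ κ) ℝ := Matrix.of fun p q =>
    Sum.elim (fun j => Sum.elim (fun i => -M j i) (fun _ => (0:ℝ)) q)
      (Sum.elim (fun i => Sum.elim (fun _ => (0:ℝ)) (fun j => M j i) q)
        (fun _ => Sum.elim d (fun j => -b j) q)) p with hN
  set rhs : κ ⊕ (ι ⊕ Fin 1) → ℝ := Sum.elim (fun j => -b j) (Sum.elim d (fun _ => 0)) with hrhs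
  by_cases hS : ∃ p : ι ⊕ κ → ℝ, 0 ≤ p ∧ N *ᵥ p ≤ rhs
  · obtain ⟨p, hp, hple⟩ := hS
    set y := p ∘ Sum.inl with hy
    set w := p ∘ Sum.inr with hw
    have h1 : ∀ j, b j ≤ (M *ᵥ y) j := by
      intro j
      have := hple (Sum.inl j)
      simp only [hN, hrhs, Matrix.mulVec, dotProduct, Fintype.sum_sum_type,
        Matrix.of_apply, Sum.elim_inl, Sum.elim_inr] at this ⊢
      simp only [neg_mul, Finset.sum_neg_distrib, zero_mul, Finset.sum_const_zero,
        add_zero] at this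
      have h0 : ∑ x, M j x * y x = ∑ x, M j x * p (Sum.inl x) := rfl
      rw [h0]
      linarith [this]
    have h2 : ∀ i, (Mᵀ *ᵥ w) i ≤ d i := by
      intro i
      have := hple (Sum.inr (Sum.inl i))
      simpa [hN, hrhs, hw, Matrix.mulVec, dotProduct, Fintype.sum_sum_type,
        Matrix.transpose] using this
    have h3 : d ⬝ᵥ y ≤ b ⬝ᵥ w := by
      have := hple (Sum.inr (Sum.inr 0))
      simp only [hN, hrhs, Matrix.mulVec, dotProduct, Fintype.sum_sum_type,
        Matrix.of_apply, Sum.elim_inl, Sum.elim_inr] at this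
      simp only [dotProduct]
      simp only [neg_mul, Finset.sum_neg_distrib] at this
      have h0 : ∑ i, d i * y i = ∑ i, d i * p (Sum.inl i) := rfl
      have h1 : ∑ j, b j * w j = ∑ j, b j * p (Sum.inr j) := rfl
      rw [h0, h1]
      linarith [this]
    exact ⟨y, w, ⟨fun i => hp (Sum.inl i), h1⟩, ⟨fun j => hp (Sum.inr j), h2⟩, h3⟩
  · exfalso
    obtain ⟨q, hq, hq2, hq3⟩ := farkas_ineq N rhs hS
    set u := q ∘ Sum.inl with hu
    set vv : ι → ℝ := fun i => q (Sum.inr (Sum.inl i)) with hvv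
    set t := q (Sum.inr (Sum.inr 0)) with htdef
    have hA : ∀ i, (Mᵀ *ᵥ u) i ≤ t * d i := by
      intro i
      have := hq2 (Sum.inl i)
      simp only [hN, Matrix.transpose, Matrix.mulVec, dotProduct, Fintype.sum_sum_type,
        Matrix.of_apply, Sum.elim_inl, Sum.elim_inr, Pi.zero_apply] at this ⊢
      simp only [neg_mul, Finset.sum_neg_distrib, zero_mul, Finset.sum_const_zero,
        Fin.sum_univ_one] at this
      have h0 : ∑ j, M j i * u j = ∑ j, M j i * q (Sum.inl j) := by rfl
      rw [h0]
      nlinarith [this]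
    have hB : ∀ j, t * b j ≤ (M *ᵥ vv) j := by
      intro j
      have := hq2 (Sum.inr j)
      simp only [hN, Matrix.transpose, Matrix.mulVec, dotProduct, Fintype.sum_sum_type,
        Matrix.of_apply, Sum.elim_inl, Sum.elim_inr, Pi.zero_apply] at this ⊢
      simp only [zero_mul, Finset.sum_const_zero, neg_mul, Fin.sum_univ_one, zero_add] at this
      have h0 : ∑ i, M j i * vv i = ∑ i, M j i * q (Sum.inr (Sum.inl i)) := by rfl
      rw [h0]
      nlinarith [this]
    have hC : d ⬝ᵥ vv < b ⬝ᵥ u := by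
      simp only [hrhs, dotProduct, Fintype.sum_sum_type, Sum.elim_inl, Sum.elim_inr,
        neg_mul, Finset.sum_neg_distrib, Fin.sum_univ_one, zero_mul, add_zero] at hq3
      simp only [dotProduct]
      have h0 : ∑ i, d i * vv i = ∑ i, d i * q (Sum.inr (Sum.inl i)) := rfl
      have h1 : ∑ j, b j * u j = ∑ j, b j * q (Sum.inl j) := rfl
      rw [h0, h1]
      linarith [hq3]
    have ht0 : 0 ≤ t := hq (Sum.inr (Sum.inr 0))
    rcases eq_or_lt_of_le ht0 with ht | ht
    · -- t = 0
      obtain ⟨y0, hy0, hy0b⟩ := hP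
      obtain ⟨w0, hw0, hw0d⟩ := hD
      have hu0 : 0 ≤ u := fun j => hq (Sum.inl j)
      have hvv0 : 0 ≤ vv := fun i => hq (Sum.inr (Sum.inl i))
      have e1 : b ⬝ᵥ u ≤ 0 := by
        have s1 : b ⬝ᵥ u ≤ (M *ᵥ y0) ⬝ᵥ u := dot_le_dot hy0b hu0
        have s2 : (M *ᵥ y0) ⬝ᵥ u = (Mᵀ *ᵥ u) ⬝ᵥ y0 := by
          rw [dotProduct_comm, dotProduct_mulVec, Matrix.mulVec_transpose]
        have s3 : (Mᵀ *ᵥ u) ⬝ᵥ y0 ≤ 0 := by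
          have : ∀ i, (Mᵀ *ᵥ u) i ≤ 0 := fun i => by have := hA i; rw [← ht] at this; linarith
          have := dot_le_dot (a := Mᵀ *ᵥ u) (a' := 0) (fun i => this i) hy0
          simpa using this
        linarith
      have e2 : 0 ≤ d ⬝ᵥ vv := by
        have s1 : (Mᵀ *ᵥ w0) ⬝ᵥ vv ≤ d ⬝ᵥ vv := dot_le_dot hw0d hvv0
        have s2 : (Mᵀ *ᵥ w0) ⬝ᵥ vv = w0 ⬝ᵥ (M *ᵥ vv) := by
          rw [Matrix.mulVec_transpose, ← dotProduct_mulVec]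
        have s3 : 0 ≤ w0 ⬝ᵥ (M *ᵥ vv) := by
          refine dot_nonneg hw0 fun j => ?_
          have := hB j; rw [← ht] at this
          show (0:ℝ) ≤ (M *ᵥ vv) j
          linarith
        linarith
      linarith
    · -- t > 0
      set y' := t⁻¹ • vv with hy'
      set w' := t⁻¹ • u with hw'
      have hy'0 : 0 ≤ y' := fun i => mul_nonneg (inv_nonneg.mpr ht0) (hq (Sum.inr (Sum.inl i)))
      have hw'0 : 0 ≤ w' := fun j => mul_nonneg (inv_nonneg.mpr ht0) (hq (Sum.inl j))
      have hy'P : b ≤ M *ᵥ y' := by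
        intro j
        rw [hy', Matrix.mulVec_smul]
        have := hB j
        have : b j ≤ t⁻¹ * (M *ᵥ vv) j := by
          rw [← mul_le_mul_iff_right₀ ht]
          field_simp
          nlinarith [this]
        simpa using this
      have hw'D : Mᵀ *ᵥ w' ≤ d := by
        intro i
        rw [hw', Matrix.mulVec_smul]
        have := hA i
        have : t⁻¹ * (Mᵀ *ᵥ u) i ≤ d i := by
          rw [← mul_le_mul_iff_right₀ ht]
          field_simp
          nlinarith [this]
        simpa using this
      have := weak_duality hy'0 hy'P hw'0 hw'D
      rw [hy', hw', dotProduct_smul, dotProduct_smul] at this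
      have hbu : b ⬝ᵥ u ≤ d ⬝ᵥ vv := by
        have ht' : (0:ℝ) < t⁻¹ := inv_pos.mpr ht
        simp only [smul_eq_mul] at this
        exact (mul_le_mul_iff_right₀ ht').mp this
      linarith

end Strong

section ERealLP

variable {κ : Type*} [Fintype κ] [DecidableEq κ]

/-- LP strong duality in `EReal` form, assuming the dual is feasible. -/
lemma lp_duality (M : Matrix κ ι ℝ) (b : κ → ℝ) (d : ι → ℝ)
    (hD : ∃ w : κ → ℝ, 0 ≤ w ∧ Mᵀ *ᵥ w ≤ d) :
    (⨅ y : {y : ι → ℝ // 0 ≤ y ∧ b ≤ M *ᵥ y}, ((d ⬝ᵥ (y : ι → ℝ) : ℝ) : EReal))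
      = ⨆ w : {w : κ → ℝ // 0 ≤ w ∧ Mᵀ *ᵥ w ≤ d}, ((b ⬝ᵥ (w : κ → ℝ) : ℝ) : EReal) := by
  classical
  by_cases hP : ∃ y : ι → ℝ, 0 ≤ y ∧ b ≤ M *ᵥ y
  · obtain ⟨y0, w0, hy0, hw0, hval⟩ := exists_optimal_pair hP hD
    apply le_antisymm
    · refine iInf_le_of_le ⟨y0, hy0⟩ (le_iSup_of_le ⟨w0, hw0⟩ ?_)
      exact_mod_cast hval
    · refine iSup_le fun w => le_iInf fun y => ?_
      exact_mod_cast weak_duality y.2.1 y.2.2 w.2.1 w.2.2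
  · have : IsEmpty {y : ι → ℝ // 0 ≤ y ∧ b ≤ M *ᵥ y} := ⟨fun y => hP ⟨y.1, y.2⟩⟩
    rw [iInf_of_empty]
    symm
    rw [iSup_eq_top]
    intro x hx
    obtain ⟨u, hu0, huM, hbu⟩ := dual_ray hP
    obtain ⟨w0, hw00, hw0d⟩ := hD
    by_cases hxbot : x = ⊥
    · exact ⟨⟨w0, hw00, hw0d⟩, by rw [hxbot]; exact EReal.bot_lt_coe _⟩
    · lift x to ℝ using ⟨hx.ne, hxbot⟩
      set s : ℝ := max 0 ((x - b ⬝ᵥ w0 + 1) / (b ⬝ᵥ u)) with hsdef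
      have hs0 : 0 ≤ s := le_max_left _ _
      have hs1 : (x - b ⬝ᵥ w0 + 1) / (b ⬝ᵥ u) ≤ s := le_max_right _ _
      refine ⟨⟨w0 + s • u, fun j => by
          have h1 : (0:ℝ) ≤ w0 j := hw00 j
          have h2 : 0 ≤ s * u j := mul_nonneg hs0 (hu0 j)
          show (0:ℝ) ≤ (w0 + s • u) j
          simp only [Pi.add_apply, Pi.smul_apply, smul_eq_mul]
          linarith, ?_⟩, ?_⟩
      · rw [Matrix.mulVec_add, Matrix.mulVec_smul]
        intro i
        have h1 : (Mᵀ *ᵥ w0) i ≤ d i := hw0d i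
        have h3 : (Mᵀ *ᵥ u) i ≤ 0 := huM i
        have h2 : s * (Mᵀ *ᵥ u) i ≤ 0 := mul_nonpos_of_nonneg_of_nonpos hs0 h3
        show (Mᵀ *ᵥ w0 + s • (Mᵀ *ᵥ u)) i ≤ d i
        simp only [Pi.add_apply, Pi.smul_apply, smul_eq_mul]
        linarith
      · show (x : EReal) < ((b ⬝ᵥ (w0 + s • u) : ℝ) : EReal)
        rw [EReal.coe_lt_coe_iff]
        rw [dotProduct_add, dotProduct_smul]
        have : (x - b ⬝ᵥ w0 + 1) ≤ s * (b ⬝ᵥ u) := by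
          rw [div_le_iff₀ hbu] at hs1
          linarith
        simp only [smul_eq_mul]
        linarith

end ERealLP

section ERealHelpers

/-- Adding a real constant is an order isomorphism of `EReal`. -/
noncomputable def ERealAddIso (cst : ℝ) : EReal ≃o EReal where
  toFun x := x + (cst : EReal)
  invFun x := x + ((-cst : ℝ) : EReal)
  left_inv x := by
    induction x using EReal.rec with
    | bot => simp
    | coe y =>
      show ((y : EReal) + (cst : EReal)) + ((-cst : ℝ) : EReal) = (y : EReal)
      rw [← EReal.coe_add, ← EReal.coe_add, EReal.coe_eq_coe_iff]; ring
    | top => simp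
  right_inv x := by
    induction x using EReal.rec with
    | bot => simp
    | coe y =>
      show ((y : EReal) + ((-cst : ℝ) : EReal)) + (cst : EReal) = (y : EReal)
      rw [← EReal.coe_add, ← EReal.coe_add, EReal.coe_eq_coe_iff]; ring
    | top => simp
  map_rel_iff' := by
    intro a b
    constructor
    · intro h
      have h2 := add_le_add_left h ((-cst : ℝ) : EReal)
      calc a = a + (cst : EReal) + ((-cst : ℝ) : EReal) := by
              induction a using EReal.rec with
              | bot => simp
              | coe y =>
                rw [← EReal.coe_add, ← EReal.coe_add, EReal.coe_eq_coe_iff]; ring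
              | top => simp
        _ ≤ b + (cst : EReal) + ((-cst : ℝ) : EReal) := h2
        _ = b := by
              induction b using EReal.rec with
              | bot => simp
              | coe y =>
                rw [← EReal.coe_add, ← EReal.coe_add, EReal.coe_eq_coe_iff]; ring
              | top => simp
    · intro h
      exact add_le_add_left h _

lemma coe_iSup_add {α : Sort*} (f : α → ℝ) (cst : ℝ) :
    (⨆ a, ((f a + cst : ℝ) : EReal)) = (⨆ a, ((f a : ℝ) : EReal)) + (cst : EReal) := by
  have := (ERealAddIso cst).map_iSup (fun a => ((f a : ℝ) : EReal))
  simp only [ERealAddIso, RelIso.coe_fn_mk, Equiv.coe_fn_mk] at this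
  simp only [EReal.coe_add]
  exact this.symm

lemma coe_iInf_add {α : Sort*} (f : α → ℝ) (cst : ℝ) :
    (⨅ a, ((cst + f a : ℝ) : EReal)) = (cst : EReal) + ⨅ a, ((f a : ℝ) : EReal) := by
  have h1 := (ERealAddIso cst).map_iInf (fun a => ((f a : ℝ) : EReal))
  simp only [ERealAddIso, RelIso.coe_fn_mk, Equiv.coe_fn_mk] at h1
  have h2 : ∀ a, ((cst + f a : ℝ) : EReal) = ((f a : ℝ) : EReal) + (cst : EReal) := fun a => by
    rw [← EReal.coe_add, add_comm]
  calc ⨅ a, ((cst + f a : ℝ) : EReal) = ⨅ a, (((f a : ℝ) : EReal) + (cst : EReal)) :=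
        iInf_congr h2
    _ = (⨅ a, ((f a : ℝ) : EReal)) + (cst : EReal) := h1.symm
    _ = (cst : EReal) + ⨅ a, ((f a : ℝ) : EReal) := add_comm _ _

lemma iSup_subtype_iff {α : Sort*} {p q : α → Prop} (hpq : ∀ a, p a ↔ q a) (f : α → EReal) :
    (⨆ a : Subtype p, f a.1) = ⨆ a : Subtype q, f a.1 := by
  apply le_antisymm
  · exact iSup_le fun a => le_iSup_of_le ⟨a.1, (hpq _).mp a.2⟩ le_rfl
  · exact iSup_le fun a => le_iSup_of_le ⟨a.1, (hpq _).mpr a.2⟩ le_rfl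

lemma iInf_subtype_iff {α : Sort*} {p q : α → Prop} (hpq : ∀ a, p a ↔ q a) (f : α → EReal) :
    (⨅ a : Subtype p, f a.1) = ⨅ a : Subtype q, f a.1 := by
  apply le_antisymm
  · exact le_iInf fun a => iInf_le_of_le ⟨a.1, (hpq _).mpr a.2⟩ le_rfl
  · exact le_iInf fun a => iInf_le_of_le ⟨a.1, (hpq _).mp a.2⟩ le_rfl

end ERealHelpers
/-- If the uncertainty set `U = {h ≥ 0 | R h ≤ r}` is nonempty, then the
two-stage adjustable robust problem and its dualized reformulation have equal values. -/
theorem adjustable_eq_dualized {m n L : ℕ} (hm : 0 < m) (hn : 0 < n) (hL : 0 < L)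
    (c d : Fin n → ℝ) (A B : Matrix (Fin m) (Fin n) ℝ)
    (R : Matrix (Fin L) (Fin m) ℝ) (r : Fin L → ℝ)
    (hc : 0 ≤ c) (hd : 0 ≤ d) (hA : ∀ i j, 0 ≤ A i j) (hB : ∀ i j, 0 ≤ B i j)
    (hR : ∀ i j, 0 ≤ R i j) (hr : 0 ≤ r)
    (hU : (polyU R r).Nonempty) :
    zAR (polyU R r) c d A B = zdAR c d A B R r := by
  classical
  unfold zAR zdAR
  refine iInf_congr fun x => ?_
  congr 1
  have hDfeas : ∃ w : Fin m → ℝ, 0 ≤ w ∧ Bᵀ *ᵥ w ≤ d :=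
    ⟨0, le_rfl, by simpa [Matrix.mulVec_zero] using hd⟩
  have hRfeas : ∃ h : Fin m → ℝ, 0 ≤ h ∧ (Rᵀ)ᵀ *ᵥ h ≤ r :=
    ⟨0, le_rfl, by simpa [Matrix.mulVec_zero] using hr⟩
  set ax : Fin m → ℝ := A *ᵥ (x : Fin n → ℝ) with hax
  have step1 : ∀ h : polyU R r,
      (⨅ _y : {y : Fin n → ℝ // 0 ≤ y ∧
          (h : Fin m → ℝ) ≤ ax + B *ᵥ y}, ((d ⬝ᵥ (_y : Fin n → ℝ) : ℝ) : EReal))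
      = ⨆ w : {w : Fin m → ℝ // 0 ≤ w ∧ Bᵀ *ᵥ w ≤ d},
          ((((h : Fin m → ℝ) - ax) ⬝ᵥ (w : Fin m → ℝ) : ℝ) : EReal) := by
    intro h
    rw [← lp_duality B ((h : Fin m → ℝ) - ax) d hDfeas]
    exact iInf_subtype_iff
      (fun y => and_congr Iff.rfl sub_le_iff_le_add'.symm)
      (fun y => ((d ⬝ᵥ y : ℝ) : EReal))
  have step3 : ∀ w : {w : Fin m → ℝ // 0 ≤ w ∧ Bᵀ *ᵥ w ≤ d},
      (⨆ h : polyU R r, ((((h : Fin m → ℝ) - ax) ⬝ᵥ (w : Fin m → ℝ) : ℝ) : EReal))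
      = (⨅ l : {l : Fin L → ℝ // 0 ≤ l ∧ (w : Fin m → ℝ) ≤ Rᵀ *ᵥ l},
          ((r ⬝ᵥ (l : Fin L → ℝ) : ℝ) : EReal)) + (((-ax) ⬝ᵥ (w : Fin m → ℝ) : ℝ) : EReal) := by
    intro w
    have e1 : ∀ h : polyU R r,
        ((((h : Fin m → ℝ) - ax) ⬝ᵥ (w : Fin m → ℝ) : ℝ) : EReal)
        = ((((w : Fin m → ℝ) ⬝ᵥ (h : Fin m → ℝ)) + ((-ax) ⬝ᵥ (w : Fin m → ℝ)) : ℝ) : EReal) := by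
      intro h
      congr 1
      rw [sub_dotProduct, neg_dotProduct, dotProduct_comm]
      ring
    rw [iSup_congr e1]
    rw [coe_iSup_add (fun h : polyU R r => (w : Fin m → ℝ) ⬝ᵥ (h : Fin m → ℝ))
      ((-ax) ⬝ᵥ (w : Fin m → ℝ))]
    congr 1
    rw [lp_duality (Rᵀ) (w : Fin m → ℝ) r hRfeas]
    refine (iSup_subtype_iff (fun h => ?_)
      (fun h => (((w : Fin m → ℝ) ⬝ᵥ h : ℝ) : EReal))).symm
    show h ∈ polyU R r ↔ _
    simp [polyU, Matrix.transpose_transpose]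
  have step4 : ∀ w : {w : Fin m → ℝ // 0 ≤ w ∧ Bᵀ *ᵥ w ≤ d},
      (⨅ l : {l : Fin L → ℝ // 0 ≤ l ∧ (w : Fin m → ℝ) ≤ Rᵀ *ᵥ l},
          (((-ax) ⬝ᵥ (w : Fin m → ℝ) + r ⬝ᵥ (l : Fin L → ℝ) : ℝ) : EReal))
      = (((-ax) ⬝ᵥ (w : Fin m → ℝ) : ℝ) : EReal)
        + ⨅ l : {l : Fin L → ℝ // 0 ≤ l ∧ (w : Fin m → ℝ) ≤ Rᵀ *ᵥ l},
            ((r ⬝ᵥ (l : Fin L → ℝ) : ℝ) : EReal) := by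
    intro w
    exact coe_iInf_add (fun l : {l : Fin L → ℝ // 0 ≤ l ∧ (w : Fin m → ℝ) ≤ Rᵀ *ᵥ l} =>
      r ⬝ᵥ (l : Fin L → ℝ)) ((-ax) ⬝ᵥ (w : Fin m → ℝ))
  calc (⨆ h : polyU R r,
        ⨅ _y : {y : Fin n → ℝ // 0 ≤ y ∧ (h : Fin m → ℝ) ≤ ax + B *ᵥ y},
          ((d ⬝ᵥ (_y : Fin n → ℝ) : ℝ) : EReal))
      = ⨆ h : polyU R r, ⨆ w : {w : Fin m → ℝ // 0 ≤ w ∧ Bᵀ *ᵥ w ≤ d},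
          ((((h : Fin m → ℝ) - ax) ⬝ᵥ (w : Fin m → ℝ) : ℝ) : EReal) := iSup_congr step1
    _ = ⨆ w : {w : Fin m → ℝ // 0 ≤ w ∧ Bᵀ *ᵥ w ≤ d}, ⨆ h : polyU R r,
          ((((h : Fin m → ℝ) - ax) ⬝ᵥ (w : Fin m → ℝ) : ℝ) : EReal) := iSup_comm
    _ = ⨆ w : {w : Fin m → ℝ // 0 ≤ w ∧ Bᵀ *ᵥ w ≤ d},
          ((⨅ l : {l : Fin L → ℝ // 0 ≤ l ∧ (w : Fin m → ℝ) ≤ Rᵀ *ᵥ l},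
            ((r ⬝ᵥ (l : Fin L → ℝ) : ℝ) : EReal))
            + (((-ax) ⬝ᵥ (w : Fin m → ℝ) : ℝ) : EReal)) := iSup_congr step3
    _ = ⨆ w : {w : Fin m → ℝ // 0 ≤ w ∧ Bᵀ *ᵥ w ≤ d},
          ⨅ l : {l : Fin L → ℝ // 0 ≤ l ∧ (w : Fin m → ℝ) ≤ Rᵀ *ᵥ l},
            (((-ax) ⬝ᵥ (w : Fin m → ℝ) + r ⬝ᵥ (l : Fin L → ℝ) : ℝ) : EReal) := by
        refine iSup_congr fun w => ?_
        rw [step4 w, add_comm]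
    _ = ⨆ w : dualW B d,
          ⨅ l : {l : Fin L → ℝ // 0 ≤ l ∧ (w : Fin m → ℝ) ≤ Rᵀ *ᵥ l},
            (((-ax) ⬝ᵥ (w : Fin m → ℝ) + r ⬝ᵥ (l : Fin L → ℝ) : ℝ) : EReal) := by
        refine iSup_subtype_iff (p := fun w : Fin m → ℝ => 0 ≤ w ∧ Bᵀ *ᵥ w ≤ d)
          (q := fun w : Fin m → ℝ => w ∈ dualW B d) (fun w => ?_)
          (fun w' : Fin m → ℝ => ⨅ l : {l : Fin L → ℝ // 0 ≤ l ∧ w' ≤ Rᵀ *ᵥ l},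
            (((-ax) ⬝ᵥ w' + r ⬝ᵥ (l : Fin L → ℝ) : ℝ) : EReal))
        simp [dualW]
end

section
/- Suppose the uncertainty set U = {h ∈ ℝ^m : h ≥ 0, R h ≤ r} is nonempty and bounded. Then the affine-policy version of the two-stage adjustable robust problem and the affine-policy version of its dualized reformulation have equal optimal values: z_Aff(B) = z_dAff(B). -/
open Matrix MeasureTheory ProbabilityTheory

section AuxFarkas

open scoped InnerProductSpace

variable {ι : Type*} [Fintype ι] {E : Type*} [NormedAddCommGroup E]
  [InnerProductSpace ℝ E] [FiniteDimensional ℝ E]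

open Classical in
/-- Conical Carathéodory: any nonnegative combination can be rewritten as a nonnegative
combination supported on a linearly independent subfamily. -/
theorem carat (g : ι → E) (s : Finset ι) (c : ι → ℝ) (hc : 0 ≤ c)
    (hsupp : ∀ i ∉ s, c i = 0) :
    ∃ (I : Finset ι) (c' : ι → ℝ), LinearIndependent ℝ (fun i : I => g i) ∧ 0 ≤ c' ∧
      (∀ i ∉ I, c' i = 0) ∧ ∑ i, c' i • g i = ∑ i, c i • g i := by
  induction s using Finset.strongInduction generalizing c with
  | _ s ih =>
  by_cases hli : LinearIndependent ℝ (fun i : s => g i)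
  · exact ⟨s, c, hli, hc, hsupp, rfl⟩
  · -- get a dependency
    obtain ⟨w₀, hw0sum, i₁, hi₁⟩ := Fintype.not_linearIndependent_iff.mp hli
    have key : ∀ w : ι → ℝ, (∀ i ∉ s, w i = 0) → (∑ i, w i • g i = 0) → (∃ i ∈ s, 0 < w i) →
        ∃ (I : Finset ι) (c' : ι → ℝ), LinearIndependent ℝ (fun i : I => g i) ∧ 0 ≤ c' ∧
          (∀ i ∉ I, c' i = 0) ∧ ∑ i, c' i • g i = ∑ i, c i • g i := by
      intro w hwsupp hwsum hwpos
      set F : Finset ι := s.filter (fun i => 0 < w i) with hF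
      have hFne : F.Nonempty := by
        obtain ⟨i, his, hwi⟩ := hwpos
        exact ⟨i, Finset.mem_filter.mpr ⟨his, hwi⟩⟩
      obtain ⟨i₀, hi₀F, hi₀eq⟩ := Finset.exists_mem_eq_inf' hFne (fun i => c i / w i)
      set t : ℝ := F.inf' hFne (fun i => c i / w i) with ht
      have hi₀s : i₀ ∈ s := (Finset.mem_filter.mp hi₀F).1
      have hwi₀ : 0 < w i₀ := (Finset.mem_filter.mp hi₀F).2
      have ht0 : 0 ≤ t := by
        rw [hi₀eq]
        exact div_nonneg (hc i₀) hwi₀.le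
      set c' : ι → ℝ := fun i => c i - t * w i with hc'
      have hc'0 : 0 ≤ c' := by
        intro i
        by_cases hwi : 0 < w i
        · have his : i ∈ s := by
            by_contra hns
            rw [hwsupp i hns] at hwi; exact lt_irrefl _ hwi
          have h1 : t ≤ c i / w i := Finset.inf'_le _ (Finset.mem_filter.mpr ⟨his, hwi⟩)
          have h2 := (le_div_iff₀ hwi).mp h1
          simp only [hc', Pi.zero_apply]
          linarith
        · push_neg at hwi
          have h1 : t * w i ≤ 0 := mul_nonpos_of_nonneg_of_nonpos ht0 hwi
          have h2 := hc i
          simp only [Pi.zero_apply] at h2 ⊢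
          simp only [hc']
          linarith
      have hc'supp : ∀ i ∉ s.erase i₀, c' i = 0 := by
        intro i hi
        rw [Finset.mem_erase] at hi
        push_neg at hi
        by_cases hii : i = i₀
        · subst hii
          simp only [hc', hi₀eq]
          rw [div_mul_cancel₀ (c i) hwi₀.ne']
          ring
        · have hns : i ∉ s := hi hii
          simp [hc', hsupp i hns, hwsupp i hns]
      have hsum : ∑ i, c' i • g i = ∑ i, c i • g i := by
        simp only [hc', sub_smul, Finset.sum_sub_distrib, mul_smul]
        rw [← Finset.smul_sum, hwsum, smul_zero, sub_zero]
      obtain ⟨I, c'', h1, h2, h3, h4⟩ :=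
        ih (s.erase i₀) (Finset.erase_ssubset hi₀s) c' hc'0 hc'supp
      exact ⟨I, c'', h1, h2, h3, h4.trans hsum⟩
    -- extend w₀ to ι by zero
    set w : ι → ℝ := fun i => if h : i ∈ s then w₀ ⟨i, h⟩ else 0 with hw
    have hwsupp : ∀ i ∉ s, w i = 0 := fun i hi => by simp [hw, hi]
    have hwsum : ∑ i, w i • g i = 0 := by
      rw [← Finset.sum_subset (Finset.subset_univ s) (fun i _ hi => by
        rw [hwsupp i hi, zero_smul])]
      rw [← Finset.sum_attach s (fun i => w i • g i)]
      simpa [hw] using hw0sum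
    by_cases hpos : ∃ i ∈ s, 0 < w i
    · exact key w hwsupp hwsum hpos
    · -- use -w
      apply key (-w) (fun i hi => by simp [hwsupp i hi]) (by simp only [Pi.neg_apply, neg_smul, Finset.sum_neg_distrib, hwsum, neg_zero])
      push_neg at hpos
      refine ⟨i₁, i₁.2, ?_⟩
      have hne : w i₁ ≠ 0 := by simpa [hw, i₁.2] using hi₁
      have := hpos i₁ i₁.2
      simp only [Pi.neg_apply]
      rcases lt_or_eq_of_le this with h | h
      · linarith
      · exact absurd h hne

/-- A finitely generated cone is closed. -/
theorem cone_isClosed (g : ι → E) :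
    IsClosed {x : E | ∃ c : ι → ℝ, 0 ≤ c ∧ x = ∑ i, c i • g i} := by
  classical
  have hdecomp : {x : E | ∃ c : ι → ℝ, 0 ≤ c ∧ x = ∑ i, c i • g i} =
      ⋃ (I : Finset ι) (_ : LinearIndependent ℝ (fun i : I => g i)),
        {x : E | ∃ c : I → ℝ, 0 ≤ c ∧ x = ∑ i : I, c i • g i} := by
    ext x
    simp only [Set.mem_setOf_eq, Set.mem_iUnion]
    constructor
    · rintro ⟨c, hc, rfl⟩
      obtain ⟨I, c', hli, hc', hsupp, hsum⟩ := carat g Finset.univ c hc (by simp)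
      refine ⟨I, hli, fun i => c' i, fun i => hc' i, ?_⟩
      rw [← hsum,
        ← Finset.sum_subset (Finset.subset_univ I) (fun i _ hi => by rw [hsupp i hi, zero_smul]),
        ← Finset.sum_attach I (fun i => c' i • g i)]
      rfl
    · rintro ⟨I, hli, c, hc, rfl⟩
      refine ⟨fun i => if h : i ∈ I then c ⟨i, h⟩ else 0, fun i => ?_, ?_⟩
      · by_cases h : i ∈ I <;> simp [h] <;> exact hc _
      rw [← Finset.sum_subset (Finset.subset_univ I) (fun i _ hi => by simp [hi]),
        ← Finset.sum_attach I]
      congr 1; ext i; simp [i.2]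
  rw [hdecomp]
  refine isClosed_iUnion_of_finite (fun I => isClosed_iUnion_of_finite (fun hli => ?_))
  -- image of the nonnegative orthant under an injective linear map
  set T : (I → ℝ) →ₗ[ℝ] E :=
    { toFun := fun c => ∑ i : I, c i • g i
      map_add' := fun a b => by simp [add_smul, Finset.sum_add_distrib]
      map_smul' := fun a b => by simp [mul_smul, ← Finset.smul_sum] } with hT
  have hinj : LinearMap.ker T = ⊥ := by
    rw [LinearMap.ker_eq_bot']
    intro c hc
    funext i
    exact Fintype.linearIndependent_iff.mp hli c hc i
  have hce := LinearMap.isClosedEmbedding_of_injective (f := T) hinj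
  have : {x : E | ∃ c : I → ℝ, 0 ≤ c ∧ x = ∑ i : I, c i • g i} = T '' {c | 0 ≤ c} := by
    ext x
    simp only [Set.mem_setOf_eq, Set.mem_image]
    constructor
    · rintro ⟨c, hc, rfl⟩; exact ⟨c, hc, rfl⟩
    · rintro ⟨c, hc, rfl⟩; exact ⟨c, hc, rfl⟩
  rw [this]
  refine hce.isClosedMap _ ?_
  have : {c : I → ℝ | 0 ≤ c} = ⋂ i, {c : I → ℝ | 0 ≤ c i} := by
    ext c; simp [Pi.le_def]
  rw [this]
  exact isClosed_iInter fun i => isClosed_le continuous_const (continuous_apply i)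

theorem farkas {k m : ℕ} (M : Matrix (Fin k) (Fin m) ℝ) (u : Fin k → ℝ)
    (a : Fin m → ℝ) (b : ℝ)
    (h1 : ∀ h : Fin m → ℝ, 0 ≤ h → M *ᵥ h ≤ u → a ⬝ᵥ h ≤ b)
    (h3 : ∀ h : Fin m → ℝ, 0 ≤ h → M *ᵥ h ≤ 0 → a ⬝ᵥ h ≤ 0) :
    ∃ lam : Fin k → ℝ, 0 ≤ lam ∧ a ≤ Mᵀ *ᵥ lam ∧ u ⬝ᵥ lam ≤ b := by
  classical
  set κ := Fin k ⊕ (Fin m ⊕ Unit) with hκ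
  set E' := EuclideanSpace ℝ (Fin m ⊕ Unit) with hE'
  set Ve : (∀ _ : Fin m ⊕ Unit, ℝ) ≃ₗ[ℝ] E' :=
    (WithLp.linearEquiv 2 ℝ (∀ _ : Fin m ⊕ Unit, ℝ)).symm with hVe
  have inner_Ve : ∀ f h : (Fin m ⊕ Unit) → ℝ, ⟪Ve f, Ve h⟫_ℝ = ∑ i, f i * h i := by
    intro f h
    rw [hVe, PiLp.inner_apply]
    simp [RCLike.inner_apply, WithLp.linearEquiv, mul_comm]
  set gfun : κ → ((Fin m ⊕ Unit) → ℝ) := fun i =>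
    Sum.elim (fun i : Fin k => Sum.elim (fun j => M i j) (fun _ => u i))
      (Sum.elim (fun j : Fin m => Sum.elim (fun j' => if j' = j then (-1:ℝ) else 0) 0)
        (fun _ => Sum.elim 0 (fun _ => (1:ℝ)))) i with hgfun
  set G : κ → E' := fun i => Ve (gfun i) with hG
  set S : Set E' := {x : E' | ∃ c : κ → ℝ, 0 ≤ c ∧ x = ∑ i, c i • G i} with hS
  set z : E' := Ve (Sum.elim a (fun _ => b)) with hz
  -- main claim: z ∈ S
  have hzS : z ∈ S := by
    by_contra hns
    set K : ConvexCone ℝ E' :=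
      { carrier := S
        smul_mem' := by
          rintro t ht x ⟨c, hc, rfl⟩
          refine ⟨fun i => t * c i, fun i => mul_nonneg ht.le (hc i), ?_⟩
          rw [Finset.smul_sum]
          exact Finset.sum_congr rfl fun i _ => smul_smul t (c i) (G i)
        add_mem' := by
          rintro x ⟨c, hc, rfl⟩ y ⟨c', hc', rfl⟩
          refine ⟨c + c', fun i => add_nonneg (hc i) (hc' i), ?_⟩
          rw [← Finset.sum_add_distrib]
          exact Finset.sum_congr rfl fun i _ => by simp [add_smul] } with hK
    have hKne : (K : Set E').Nonempty :=
      ⟨0, ⟨0, le_refl _, by simp [Pi.zero_apply]⟩⟩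
    have hKcl : IsClosed (K : Set E') := cone_isClosed G
    obtain ⟨y, hy1, hy2⟩ :=
      ProperCone.hyperplane_separation' (E := E')
        ({ toSubmodule := K.toPointedCone ⟨0, le_refl _, by simp⟩, isClosed' := hKcl } :
          ProperCone ℝ E') hns
    set yf : (Fin m ⊕ Unit) → ℝ := fun i => (WithLp.linearEquiv 2 ℝ _) y i with hyf
    have hyv : y = Ve yf := rfl
    -- each generator is in S
    have hgen : ∀ i : κ, 0 ≤ ∑ j, gfun i j * yf j := by
      intro i
      have hmem : G i ∈ K := by
        refine ⟨fun i' => if i' = i then 1 else 0, fun i' => by positivity, ?_⟩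
        simp [Finset.sum_ite_eq', Finset.sum_ite_eq, ite_smul]
        rw [Finset.sum_eq_single i (fun j _ hj => if_neg hj) (fun h => absurd (Finset.mem_univ i) h), if_pos rfl]
      have := hy1 _ hmem
      rwa [hyv, hG, inner_Ve] at this
    set t : ℝ := yf (Sum.inr ()) with htdef
    have hti : ∀ i : Fin k, 0 ≤ ∑ j, M i j * yf (Sum.inl j) + u i * t := by
      intro i
      have h0 := hgen (Sum.inl i)
      rw [Fintype.sum_sum_type] at h0
      simpa only [hgfun, Sum.elim_inl, Sum.elim_inr, Finset.univ_unique,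
        Finset.sum_singleton] using h0
    have hhj : ∀ j : Fin m, yf (Sum.inl j) ≤ 0 := by
      intro j
      have h0 := hgen (Sum.inr (Sum.inl j))
      rw [Fintype.sum_sum_type] at h0
      simp only [hgfun, Sum.elim_inl, Sum.elim_inr, Finset.univ_unique, Finset.sum_singleton,
        Pi.zero_apply, zero_mul, add_zero, ite_mul, neg_mul, one_mul,
        Finset.sum_ite_eq', Finset.mem_univ, if_true] at h0
      linarith
    have ht : 0 ≤ t := by
      have h0 := hgen (Sum.inr (Sum.inr ()))
      rw [Fintype.sum_sum_type] at h0
      simpa only [hgfun, Sum.elim_inl, Sum.elim_inr, Finset.univ_unique, Finset.sum_singleton,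
        Pi.zero_apply, zero_mul, one_mul, Finset.sum_const_zero, zero_add] using h0
    have hneg : ∑ j, yf (Sum.inl j) * a j + t * b < 0 := by
      have h0 := hy2
      rw [real_inner_comm, hyv, hz, inner_Ve, Fintype.sum_sum_type] at h0
      simpa only [Sum.elim_inl, Sum.elim_inr, Finset.univ_unique, Finset.sum_singleton] using h0
    set h : Fin m → ℝ := fun j => -yf (Sum.inl j) with hhdef
    have hh0 : 0 ≤ h := fun j => by
      simp only [hhdef, Pi.zero_apply, neg_nonneg]; exact hhj j
    have hMh : ∀ i, (M *ᵥ h) i ≤ u i * t := by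
      intro i
      have h0 := hti i
      simp only [mulVec, dotProduct, hhdef, mul_neg, Finset.sum_neg_distrib]
      linarith
    have hah : t * b < a ⬝ᵥ h := by
      have he : a ⬝ᵥ h = -∑ j, yf (Sum.inl j) * a j := by
        simp only [dotProduct, hhdef, mul_neg, Finset.sum_neg_distrib, neg_inj]
        exact Finset.sum_congr rfl fun j _ => mul_comm _ _
      rw [he]
      linarith
    rcases lt_or_eq_of_le ht with htpos | htzero
    · have hs1 : (0:ℝ) ≤ 1/t := by positivity
      have key := h1 ((1/t) • h) (fun j => by
          have := hh0 j
          simp only [Pi.smul_apply, smul_eq_mul, Pi.zero_apply]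
          exact mul_nonneg hs1 this)
        (by
          intro i
          rw [Matrix.mulVec_smul]
          simp only [Pi.smul_apply, smul_eq_mul]
          rw [one_div_mul_eq_div, div_le_iff₀ htpos]
          exact hMh i)
      rw [dotProduct_smul] at key
      simp only [smul_eq_mul] at key
      rw [one_div_mul_eq_div, div_le_iff₀ htpos] at key
      linarith [key, hah]
    · have key := h3 h hh0 (fun i => by
        have h0 := hMh i
        rw [← htzero, mul_zero] at h0
        simpa using h0)
      rw [← htzero, zero_mul] at hah
      linarith
  -- extract the coefficients
  obtain ⟨c, hc, hceq⟩ := hzS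
  have hsum : Sum.elim a (fun _ => b) = ∑ i, c i • gfun i := by
    apply Ve.injective
    rw [← hz, hceq, map_sum]
    exact Finset.sum_congr rfl fun i _ => by rw [_root_.map_smul]
  refine ⟨fun i => c (Sum.inl i), fun i => hc _, ?_, ?_⟩
  · intro j
    have hj := congrFun hsum (Sum.inl j)
    rw [Finset.sum_apply] at hj
    simp only [Pi.smul_apply, smul_eq_mul] at hj
    rw [Fintype.sum_sum_type, Fintype.sum_sum_type] at hj
    simp only [hgfun, Sum.elim_inl, Sum.elim_inr, mul_ite, mul_neg, mul_one, mul_zero,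
      Finset.sum_ite_eq', Finset.sum_ite_eq, Finset.mem_univ, if_true, Pi.zero_apply, Finset.univ_unique,
      Finset.sum_singleton, Finset.sum_const_zero, add_zero] at hj
    have hrho : 0 ≤ c (Sum.inr (Sum.inl j)) := hc _
    have hMt : (Mᵀ *ᵥ fun i => c (Sum.inl i)) j = ∑ i, c (Sum.inl i) * M i j := by
      simp [mulVec, dotProduct, transpose_apply, mul_comm]
    rw [hMt]
    rw [hj]
    linarith
  · have hb := congrFun hsum (Sum.inr ())
    rw [Finset.sum_apply] at hb
    simp only [Pi.smul_apply, smul_eq_mul] at hb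
    rw [Fintype.sum_sum_type, Fintype.sum_sum_type] at hb
    simp only [hgfun, Sum.elim_inl, Sum.elim_inr, mul_zero, mul_one, Finset.sum_const_zero,
      add_zero, zero_add, Pi.zero_apply, Finset.univ_unique, Finset.sum_singleton] at hb
    have htau : 0 ≤ c (Sum.inr (Sum.inr ())) := hc _
    have hformula : u ⬝ᵥ (fun i => c (Sum.inl i)) = ∑ i, c (Sum.inl i) * u i := by
      simp only [dotProduct]
      exact Finset.sum_congr rfl fun i _ => mul_comm _ _
    rw [hformula]
    linarith [hb.le, htau]

end AuxFarkas

section Toolkit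

variable {α β γ : Type*} [Fintype α] [Fintype β] [Fintype γ]

lemma mulVec_nonneg' {M : Matrix α β ℝ} (hM : ∀ i j, 0 ≤ M i j) {v : β → ℝ} (hv : 0 ≤ v) :
    0 ≤ M *ᵥ v :=
  fun i => Finset.sum_nonneg fun j _ => mul_nonneg (hM i j) (hv j)

lemma mulVec_mono_mat {M N : Matrix α β ℝ} (h : ∀ i j, M i j ≤ N i j) {v : β → ℝ}
    (hv : 0 ≤ v) : M *ᵥ v ≤ N *ᵥ v :=
  fun i => Finset.sum_le_sum fun j _ => mul_le_mul_of_nonneg_right (h i j) (hv j)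

lemma dot_mv (u : α → ℝ) (M : Matrix α β ℝ) (v : β → ℝ) :
    u ⬝ᵥ (M *ᵥ v) = (Mᵀ *ᵥ u) ⬝ᵥ v := by
  rw [dotProduct_mulVec, ← Matrix.vecMul_transpose, Matrix.transpose_transpose]

lemma polyU_recession {m L : ℕ} {R : Matrix (Fin L) (Fin m) ℝ} {r : Fin L → ℝ}
    (hU : (polyU R r).Nonempty) (hUbdd : Bornology.IsBounded (polyU R r)) :
    ∀ h : Fin m → ℝ, 0 ≤ h → R *ᵥ h ≤ 0 → h = 0 := by
  intro h hh0 hRh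
  by_contra hne
  obtain ⟨h₀, hh₀0, hh₀R⟩ := hU
  obtain ⟨C, hC⟩ := isBounded_iff_forall_norm_le.mp hUbdd
  have hnorm : 0 < ‖h‖ := norm_pos_iff.mpr hne
  obtain ⟨N, hN⟩ := exists_nat_gt ((C + ‖h₀‖) / ‖h‖)
  have hmem : h₀ + (N : ℝ) • h ∈ polyU R r := by
    constructor
    · intro j
      have := hh0 j
      have := hh₀0 j
      simp only [Pi.add_apply, Pi.smul_apply, smul_eq_mul, Pi.zero_apply] at *
      positivity
    · intro i
      rw [Matrix.mulVec_add, Matrix.mulVec_smul]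
      have h1 := hRh i
      have h2 := hh₀R i
      simp only [Pi.add_apply, Pi.smul_apply, smul_eq_mul, Pi.zero_apply] at *
      nlinarith [Nat.cast_nonneg (α := ℝ) N]
  have hb := hC _ hmem
  have h1 : (N : ℝ) * ‖h‖ - ‖h₀‖ ≤ ‖h₀ + (N : ℝ) • h‖ := by
    have h3 := norm_add_le (h₀ + (N : ℝ) • h) (-h₀)
    simp only [add_neg_cancel_comm, norm_neg] at h3
    have h2 : ‖(N : ℝ) • h‖ = (N : ℝ) * ‖h‖ := by
      rw [norm_smul]; simp
    linarith
  rw [div_lt_iff₀ hnorm] at hN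
  linarith

lemma dualW_recession {m n : ℕ} {B : Matrix (Fin m) (Fin n) ℝ} {d : Fin n → ℝ} (hd : 0 ≤ d)
    {a : Fin m → ℝ} {b : ℝ} (h1 : ∀ w ∈ dualW B d, a ⬝ᵥ w ≤ b) :
    ∀ w : Fin m → ℝ, 0 ≤ w → Bᵀ *ᵥ w ≤ 0 → a ⬝ᵥ w ≤ 0 := by
  intro w hw0 hBw
  have hscale : ∀ t : ℝ, 0 ≤ t → t * (a ⬝ᵥ w) ≤ b := by
    intro t ht
    have hmem : t • w ∈ dualW B d := by
      constructor
      · intro i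
        simpa using mul_nonneg ht (hw0 i)
      · intro j
        rw [Matrix.mulVec_smul]
        have := hBw j
        have := hd j
        simp only [Pi.smul_apply, smul_eq_mul, Pi.zero_apply] at *
        nlinarith
    have := h1 _ hmem
    rwa [dotProduct_smul, smul_eq_mul] at this
  by_contra hpos
  push_neg at hpos
  have hb0 : 0 < b := lt_of_lt_of_le hpos (by linarith [hscale 1 zero_le_one])
  have := hscale ((b + 1) / (a ⬝ᵥ w)) (by positivity)
  rw [div_mul_cancel₀] at this
  · linarith
  · exact ne_of_gt hpos

end Toolkit

/-- From a feasible affine policy for the primal problem, construct one for the dual with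
value at most the same. -/
lemma primal_to_dual {m n L : ℕ} {d : Fin n → ℝ} {A B : Matrix (Fin m) (Fin n) ℝ}
    {R : Matrix (Fin L) (Fin m) ℝ} {r : Fin L → ℝ}
    (hU : (polyU R r).Nonempty) (hUbdd : Bornology.IsBounded (polyU R r))
    (x : Fin n → ℝ) (P : Matrix (Fin n) (Fin m) ℝ) (q : Fin n → ℝ) (t : ℝ)
    (hfeas : ∀ h ∈ polyU R r, 0 ≤ P *ᵥ h + q ∧ h ≤ A *ᵥ x + B *ᵥ (P *ᵥ h + q))
    (hobj : ∀ h ∈ polyU R r, d ⬝ᵥ (P *ᵥ h + q) ≤ t) :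
    ∃ (Q : Matrix (Fin L) (Fin m) ℝ) (s : Fin L → ℝ),
      (∀ w ∈ dualW B d, 0 ≤ Q *ᵥ w + s ∧ w ≤ Rᵀ *ᵥ (Q *ᵥ w + s)) ∧
      (∀ w ∈ dualW B d, -(A *ᵥ x) ⬝ᵥ w + r ⬝ᵥ (Q *ᵥ w + s) ≤ t) := by
  classical
  have hrec := polyU_recession hU hUbdd
  -- multiplier for the objective constraint
  obtain ⟨mu, hmu0, hmu1, hmu2⟩ := farkas R r (Pᵀ *ᵥ d) (t - d ⬝ᵥ q)
    (by
      intro h h0 hR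
      have := hobj h ⟨h0, hR⟩
      rw [dotProduct_add] at this
      rw [← dot_mv d P h]
      linarith)
    (fun h h0 hR0 => by rw [hrec h h0 hR0, dotProduct_zero])
  -- multipliers for nonnegativity of the policy
  choose vfun hv0 hv1 hv2 using fun j : Fin n =>
    farkas R r (fun i => -P j i) (q j)
      (by
        intro h h0 hR
        have h2 := (hfeas h ⟨h0, hR⟩).1 j
        have he : (fun i => -P j i) ⬝ᵥ h = -(P *ᵥ h) j := by
          simp [dotProduct, mulVec, Finset.sum_neg_distrib]
        rw [he]
        simp only [Pi.add_apply, Pi.zero_apply] at h2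
        linarith)
      (fun h h0 hR0 => by rw [hrec h h0 hR0, dotProduct_zero])
  -- multipliers for the covering constraints
  have hcol : ∀ (i : Fin m) (h : Fin m → ℝ),
      (fun j => (1 - Pᵀ * Bᵀ : Matrix (Fin m) (Fin m) ℝ) j i) ⬝ᵥ h
        = h i - ((B * P) *ᵥ h) i := by
    intro i h
    have e1 : (fun j => (1 - Pᵀ * Bᵀ : Matrix (Fin m) (Fin m) ℝ) j i) ⬝ᵥ h
        = ((1 - Pᵀ * Bᵀ : Matrix (Fin m) (Fin m) ℝ)ᵀ *ᵥ h) i := by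
      simp [mulVec, dotProduct, transpose_apply]
    rw [e1, Matrix.transpose_sub, Matrix.transpose_one, Matrix.transpose_mul,
      Matrix.transpose_transpose, Matrix.sub_mulVec, Matrix.one_mulVec]
    simp
  choose lamfun hl0 hl1 hl2 using fun i : Fin m =>
    farkas R r (fun j => (1 - Pᵀ * Bᵀ : Matrix (Fin m) (Fin m) ℝ) j i)
      ((A *ᵥ x + B *ᵥ q) i)
      (by
        intro h h0 hR
        have h2 := (hfeas h ⟨h0, hR⟩).2 i
        rw [hcol i h]
        rw [Matrix.mulVec_add, Matrix.mulVec_mulVec] at h2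
        simp only [Pi.add_apply] at h2 ⊢
        linarith)
      (fun h h0 hR0 => by rw [hrec h h0 hR0, dotProduct_zero])
  set Lam : Matrix (Fin L) (Fin m) ℝ := (Matrix.of lamfun)ᵀ with hLam
  set V : Matrix (Fin L) (Fin n) ℝ := (Matrix.of vfun)ᵀ with hV
  refine ⟨Lam - V * Bᵀ, mu + V *ᵥ d, ?_, ?_⟩
  · rintro w ⟨hw0, hwB⟩
    have hz : 0 ≤ d - Bᵀ *ᵥ w := fun j => by
      simp only [Pi.sub_apply, Pi.zero_apply, sub_nonneg]; exact hwB j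
    have hdecomp : (Lam - V * Bᵀ) *ᵥ w + (mu + V *ᵥ d)
        = Lam *ᵥ w + mu + V *ᵥ (d - Bᵀ *ᵥ w) := by
      rw [Matrix.sub_mulVec, Matrix.mulVec_sub, ← Matrix.mulVec_mulVec]
      abel
    rw [hdecomp]
    constructor
    · have t1 : 0 ≤ Lam *ᵥ w := mulVec_nonneg' (fun k i => hl0 i k) hw0
      have t2 : 0 ≤ V *ᵥ (d - Bᵀ *ᵥ w) := mulVec_nonneg' (fun k j => hv0 j k) hz
      intro j
      have := t1 j; have := t2 j; have := hmu0 j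
      simp only [Pi.add_apply, Pi.zero_apply] at *
      linarith
    · -- covering in the dual
      have e1 : (1 - Pᵀ * Bᵀ) *ᵥ w ≤ Rᵀ *ᵥ (Lam *ᵥ w) := by
        rw [Matrix.mulVec_mulVec]
        refine mulVec_mono_mat (fun j i => ?_) hw0
        have hentry : (Rᵀ * Lam) j i = (Rᵀ *ᵥ lamfun i) j := by
          simp [hLam, Matrix.mul_apply, mulVec, dotProduct, transpose_apply]
        rw [hentry]
        exact hl1 i j
      have e3 : (-Pᵀ) *ᵥ (d - Bᵀ *ᵥ w) ≤ Rᵀ *ᵥ (V *ᵥ (d - Bᵀ *ᵥ w)) := by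
        rw [Matrix.mulVec_mulVec]
        refine mulVec_mono_mat (fun j j' => ?_) hz
        have hentry : (Rᵀ * V) j j' = (Rᵀ *ᵥ vfun j') j := by
          simp [hV, Matrix.mul_apply, mulVec, dotProduct, transpose_apply]
        have htarget : (-Pᵀ) j j' = -P j' j := by simp
        rw [hentry, htarget]
        exact hv1 j' j
      have heq : w = (1 - Pᵀ * Bᵀ) *ᵥ w + Pᵀ *ᵥ d + (-Pᵀ) *ᵥ (d - Bᵀ *ᵥ w) := by
        rw [Matrix.sub_mulVec, Matrix.one_mulVec, Matrix.neg_mulVec, Matrix.mulVec_sub,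
          ← Matrix.mulVec_mulVec]
        abel
      intro j
      have q1 := e1 j; have q2 := hmu1 j; have q3 := e3 j
      have q4 := congrFun heq j
      rw [Matrix.mulVec_add, Matrix.mulVec_add]
      simp only [Pi.add_apply] at *
      linarith
  · rintro w ⟨hw0, hwB⟩
    have hz : 0 ≤ d - Bᵀ *ᵥ w := fun j => by
      simp only [Pi.sub_apply, Pi.zero_apply, sub_nonneg]; exact hwB j
    have hdecomp : (Lam - V * Bᵀ) *ᵥ w + (mu + V *ᵥ d)
        = Lam *ᵥ w + mu + V *ᵥ (d - Bᵀ *ᵥ w) := by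
      rw [Matrix.sub_mulVec, Matrix.mulVec_sub, ← Matrix.mulVec_mulVec]
      abel
    rw [hdecomp, dotProduct_add, dotProduct_add]
    have b1 : r ⬝ᵥ (Lam *ᵥ w) ≤ (A *ᵥ x) ⬝ᵥ w + q ⬝ᵥ (Bᵀ *ᵥ w) := by
      rw [dot_mv]
      have hle : Lamᵀ *ᵥ r ≤ A *ᵥ x + B *ᵥ q := by
        intro i
        have hentry : (Lamᵀ *ᵥ r) i = r ⬝ᵥ lamfun i := by
          simp [hLam, mulVec, dotProduct, transpose_apply, mul_comm]
        rw [hentry]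
        exact hl2 i
      have := dotProduct_le_dotProduct_of_nonneg_right hle hw0
      rw [add_dotProduct] at this
      have hBq : (B *ᵥ q) ⬝ᵥ w = q ⬝ᵥ (Bᵀ *ᵥ w) := by
        rw [dotProduct_comm, dot_mv, dotProduct_comm]
      linarith
    have b3 : r ⬝ᵥ (V *ᵥ (d - Bᵀ *ᵥ w)) ≤ q ⬝ᵥ d - q ⬝ᵥ (Bᵀ *ᵥ w) := by
      rw [dot_mv]
      have hle : Vᵀ *ᵥ r ≤ q := by
        intro j
        have hentry : (Vᵀ *ᵥ r) j = r ⬝ᵥ vfun j := by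
          simp [hV, mulVec, dotProduct, transpose_apply, mul_comm]
        rw [hentry]
        exact hv2 j
      rw [← dotProduct_sub q]
      exact dotProduct_le_dotProduct_of_nonneg_right hle hz
    have hqd : q ⬝ᵥ d = d ⬝ᵥ q := dotProduct_comm _ _
    rw [neg_dotProduct]
    linarith [hmu2, b1, b3]

/-- From a feasible affine policy for the dual problem, construct one for the primal with
value at most the same. -/
lemma dual_to_primal {m n L : ℕ} {d : Fin n → ℝ} {A B : Matrix (Fin m) (Fin n) ℝ}
    {R : Matrix (Fin L) (Fin m) ℝ} {r : Fin L → ℝ} (hd : 0 ≤ d)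
    (x : Fin n → ℝ) (Q : Matrix (Fin L) (Fin m) ℝ) (s : Fin L → ℝ) (t' : ℝ)
    (hfeas : ∀ w ∈ dualW B d, 0 ≤ Q *ᵥ w + s ∧ w ≤ Rᵀ *ᵥ (Q *ᵥ w + s))
    (hobj : ∀ w ∈ dualW B d, -(A *ᵥ x) ⬝ᵥ w + r ⬝ᵥ (Q *ᵥ w + s) ≤ t') :
    ∃ (P : Matrix (Fin n) (Fin m) ℝ) (q : Fin n → ℝ),
      (∀ h ∈ polyU R r, 0 ≤ P *ᵥ h + q ∧ h ≤ A *ᵥ x + B *ᵥ (P *ᵥ h + q)) ∧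
      (∀ h ∈ polyU R r, d ⬝ᵥ (P *ᵥ h + q) ≤ t') := by
  classical
  -- multiplier for the objective constraint
  have hg1 : ∀ w ∈ dualW B d, (Qᵀ *ᵥ r - A *ᵥ x) ⬝ᵥ w ≤ t' - r ⬝ᵥ s := by
    intro w hw
    have h2 := hobj w hw
    rw [dotProduct_add, neg_dotProduct] at h2
    rw [sub_dotProduct, ← dot_mv r Q w]
    linarith
  obtain ⟨gam, hgam0, hgam1, hgam2⟩ := farkas Bᵀ d (Qᵀ *ᵥ r - A *ᵥ x) (t' - r ⬝ᵥ s)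
    (fun w h0 hB => hg1 w ⟨h0, hB⟩)
    (dualW_recession hd hg1)
  rw [Matrix.transpose_transpose] at hgam1
  -- multipliers for nonnegativity
  have hng : ∀ (k : Fin L) (w : Fin m → ℝ), (fun i => -Q k i) ⬝ᵥ w = -(Q *ᵥ w) k := by
    intro k w
    simp [dotProduct, mulVec, Finset.sum_neg_distrib]
  have hq1 : ∀ k : Fin L, ∀ w ∈ dualW B d, (fun i => -Q k i) ⬝ᵥ w ≤ s k := by
    intro k w hw
    have h2 := (hfeas w hw).1 k
    rw [hng]
    simp only [Pi.add_apply, Pi.zero_apply] at h2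
    linarith
  choose gfun hg0 hgA hg2 using fun k : Fin L =>
    farkas Bᵀ d (fun i => -Q k i) (s k)
      (fun w h0 hB => hq1 k w ⟨h0, hB⟩)
      (dualW_recession hd (hq1 k))
  have hgA' : ∀ k, (fun i => -Q k i) ≤ B *ᵥ gfun k := by
    intro k
    have := hgA k
    rwa [Matrix.transpose_transpose] at this
  -- multipliers for the covering constraints
  have hcol : ∀ (i : Fin m) (w : Fin m → ℝ),
      (fun j => (1 - Qᵀ * R : Matrix (Fin m) (Fin m) ℝ) j i) ⬝ᵥ w
        = w i - ((Rᵀ * Q) *ᵥ w) i := by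
    intro i w
    have e1 : (fun j => (1 - Qᵀ * R : Matrix (Fin m) (Fin m) ℝ) j i) ⬝ᵥ w
        = ((1 - Qᵀ * R : Matrix (Fin m) (Fin m) ℝ)ᵀ *ᵥ w) i := by
      simp [mulVec, dotProduct, transpose_apply]
    rw [e1, Matrix.transpose_sub, Matrix.transpose_one, Matrix.transpose_mul,
      Matrix.transpose_transpose, Matrix.sub_mulVec, Matrix.one_mulVec]
    simp
  have hc1 : ∀ i : Fin m, ∀ w ∈ dualW B d,
      (fun j => (1 - Qᵀ * R : Matrix (Fin m) (Fin m) ℝ) j i) ⬝ᵥ w ≤ (Rᵀ *ᵥ s) i := by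
    intro i w hw
    have h2 := (hfeas w hw).2 i
    rw [hcol]
    rw [Matrix.mulVec_add, Matrix.mulVec_mulVec] at h2
    simp only [Pi.add_apply] at h2
    linarith
  choose etafun heta0 hetaA heta2 using fun i : Fin m =>
    farkas Bᵀ d (fun j => (1 - Qᵀ * R : Matrix (Fin m) (Fin m) ℝ) j i) ((Rᵀ *ᵥ s) i)
      (fun w h0 hB => hc1 i w ⟨h0, hB⟩)
      (dualW_recession hd (hc1 i))
  have hetaA' : ∀ i, (fun j => (1 - Qᵀ * R : Matrix (Fin m) (Fin m) ℝ) j i) ≤ B *ᵥ etafun i := by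
    intro i
    have := hetaA i
    rwa [Matrix.transpose_transpose] at this
  set H : Matrix (Fin n) (Fin m) ℝ := (Matrix.of etafun)ᵀ with hH
  set G : Matrix (Fin n) (Fin L) ℝ := (Matrix.of gfun)ᵀ with hG
  refine ⟨H - G * R, gam + G *ᵥ r, ?_, ?_⟩
  · rintro h ⟨h0, hR⟩
    have hz : 0 ≤ r - R *ᵥ h := fun k => by
      simp only [Pi.sub_apply, Pi.zero_apply, sub_nonneg]; exact hR k
    have hdecomp : (H - G * R) *ᵥ h + (gam + G *ᵥ r)
        = H *ᵥ h + gam + G *ᵥ (r - R *ᵥ h) := by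
      rw [Matrix.sub_mulVec, Matrix.mulVec_sub, ← Matrix.mulVec_mulVec]
      abel
    rw [hdecomp]
    constructor
    · have t1 : 0 ≤ H *ᵥ h := mulVec_nonneg' (fun j i => heta0 i j) h0
      have t2 : 0 ≤ G *ᵥ (r - R *ᵥ h) := mulVec_nonneg' (fun j k => hg0 k j) hz
      intro j
      have := t1 j; have := t2 j; have := hgam0 j
      simp only [Pi.add_apply, Pi.zero_apply] at *
      linarith
    · have e1 : (1 - Qᵀ * R) *ᵥ h ≤ B *ᵥ (H *ᵥ h) := by
        rw [Matrix.mulVec_mulVec]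
        refine mulVec_mono_mat (fun j i => ?_) h0
        have hentry : (B * H) j i = (B *ᵥ etafun i) j := by
          simp [hH, Matrix.mul_apply, mulVec, dotProduct, transpose_apply]
        rw [hentry]
        exact hetaA' i j
      have e3 : (-Qᵀ) *ᵥ (r - R *ᵥ h) ≤ B *ᵥ (G *ᵥ (r - R *ᵥ h)) := by
        rw [Matrix.mulVec_mulVec]
        refine mulVec_mono_mat (fun j k => ?_) hz
        have hentry : (B * G) j k = (B *ᵥ gfun k) j := by
          simp [hG, Matrix.mul_apply, mulVec, dotProduct, transpose_apply]
        have htarget : (-Qᵀ) j k = -Q k j := by simp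
        rw [hentry, htarget]
        exact hgA' k j
      have heq : h - A *ᵥ x = (1 - Qᵀ * R) *ᵥ h + (Qᵀ *ᵥ r - A *ᵥ x)
          + (-Qᵀ) *ᵥ (r - R *ᵥ h) := by
        rw [Matrix.sub_mulVec, Matrix.one_mulVec, Matrix.neg_mulVec, Matrix.mulVec_sub,
          ← Matrix.mulVec_mulVec]
        abel
      intro j
      have q1 := e1 j; have q2 := hgam1 j; have q3 := e3 j
      have q4 := congrFun heq j
      rw [Matrix.mulVec_add, Matrix.mulVec_add]
      simp only [Pi.add_apply, Pi.sub_apply] at *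
      linarith
  · rintro h ⟨h0, hR⟩
    have hz : 0 ≤ r - R *ᵥ h := fun k => by
      simp only [Pi.sub_apply, Pi.zero_apply, sub_nonneg]; exact hR k
    have hdecomp : (H - G * R) *ᵥ h + (gam + G *ᵥ r)
        = H *ᵥ h + gam + G *ᵥ (r - R *ᵥ h) := by
      rw [Matrix.sub_mulVec, Matrix.mulVec_sub, ← Matrix.mulVec_mulVec]
      abel
    rw [hdecomp, dotProduct_add, dotProduct_add]
    have c1 : d ⬝ᵥ (H *ᵥ h) ≤ s ⬝ᵥ (R *ᵥ h) := by
      rw [dot_mv, dot_mv s R h]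
      refine dotProduct_le_dotProduct_of_nonneg_right ?_ h0
      intro i
      have hentry : (Hᵀ *ᵥ d) i = d ⬝ᵥ etafun i := by
        simp [hH, mulVec, dotProduct, transpose_apply, mul_comm]
      rw [hentry]
      exact heta2 i
    have c3 : d ⬝ᵥ (G *ᵥ (r - R *ᵥ h)) ≤ s ⬝ᵥ r - s ⬝ᵥ (R *ᵥ h) := by
      rw [dot_mv, ← dotProduct_sub s]
      refine dotProduct_le_dotProduct_of_nonneg_right ?_ hz
      intro k
      have hentry : (Gᵀ *ᵥ d) k = d ⬝ᵥ gfun k := by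
        simp [hG, mulVec, dotProduct, transpose_apply, mul_comm]
      rw [hentry]
      exact hg2 k
    have hsr : s ⬝ᵥ r = r ⬝ᵥ s := dotProduct_comm _ _
    linarith [hgam2, c1, c3]

/-- If the uncertainty set `U = {h ≥ 0 | R h ≤ r}` is nonempty and bounded,
then the affine-policy problem and the affine-policy version of its dualized
reformulation have equal optimal values. -/
theorem affine_eq_dualized_affine {m n L : ℕ} (hm : 0 < m) (hn : 0 < n) (hL : 0 < L)
    (c d : Fin n → ℝ) (A B : Matrix (Fin m) (Fin n) ℝ)
    (R : Matrix (Fin L) (Fin m) ℝ) (r : Fin L → ℝ)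
    (hc : 0 ≤ c) (hd : 0 ≤ d) (hA : ∀ i j, 0 ≤ A i j) (hB : ∀ i j, 0 ≤ B i j)
    (hR : ∀ i j, 0 ≤ R i j) (hr : 0 ≤ r)
    (hU : (polyU R r).Nonempty) (hUbdd : Bornology.IsBounded (polyU R r)) :
    zAff (polyU R r) c d A B = zdAff c d A B R r := by
  have hWmem : (0 : Fin m → ℝ) ∈ dualW B d := by
    refine ⟨le_refl _, ?_⟩
    rw [Matrix.mulVec_zero]
    exact hd
  have hWne : Nonempty ↥(dualW B d) := ⟨⟨0, hWmem⟩⟩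
  have hUne : Nonempty ↥(polyU R r) := hU.to_subtype
  apply le_antisymm
  · -- zAff ≤ zdAff
    rw [zdAff]
    apply le_iInf
    rintro ⟨⟨x, Q, s⟩, hx, hfeas⟩
    simp only
    set T' : EReal := ⨆ w : ↥(dualW B d),
      ((-(A *ᵥ x) ⬝ᵥ (w : Fin m → ℝ) + r ⬝ᵥ (Q *ᵥ (w : Fin m → ℝ) + s) : ℝ) : EReal) with hT'
    by_cases htop : T' = ⊤
    · rw [htop, EReal.coe_add_top]
      exact le_top
    have hbot : T' ≠ ⊥ := by
      intro hb
      obtain ⟨w0⟩ := hWne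
      have hle := le_iSup (fun w : ↥(dualW B d) =>
        ((-(A *ᵥ x) ⬝ᵥ (w : Fin m → ℝ) + r ⬝ᵥ (Q *ᵥ (w : Fin m → ℝ) + s) : ℝ) : EReal)) w0
      rw [← hT', hb, le_bot_iff] at hle
      exact EReal.coe_ne_bot _ hle
    have hTeq : ((T'.toReal : ℝ) : EReal) = T' := EReal.coe_toReal htop hbot
    set t' : ℝ := T'.toReal with ht'
    have hle : ∀ w ∈ dualW B d, -(A *ᵥ x) ⬝ᵥ w + r ⬝ᵥ (Q *ᵥ w + s) ≤ t' := by
      intro w hw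
      have h2 := le_iSup (fun w : ↥(dualW B d) =>
        ((-(A *ᵥ x) ⬝ᵥ (w : Fin m → ℝ) + r ⬝ᵥ (Q *ᵥ (w : Fin m → ℝ) + s) : ℝ) : EReal)) ⟨w, hw⟩
      rw [← hT', ← hTeq] at h2
      exact_mod_cast h2
    obtain ⟨P, q, hPfeas, hPobj⟩ := dual_to_primal hd x Q s t' hfeas hle
    rw [zAff]
    refine le_trans (iInf_le _ ⟨(x, P, q), hx, hPfeas⟩) ?_
    simp only
    refine add_le_add_right ?_ _
    rw [← hTeq]
    refine iSup_le fun h => ?_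
    exact EReal.coe_le_coe_iff.mpr (hPobj h h.2)
  · -- zdAff ≤ zAff
    rw [zAff]
    apply le_iInf
    rintro ⟨⟨x, P, q⟩, hx, hfeas⟩
    simp only
    set T : EReal := ⨆ h : ↥(polyU R r),
      ((d ⬝ᵥ (P *ᵥ (h : Fin m → ℝ) + q) : ℝ) : EReal) with hT
    by_cases htop : T = ⊤
    · rw [htop, EReal.coe_add_top]
      exact le_top
    have hbot : T ≠ ⊥ := by
      intro hb
      obtain ⟨h0⟩ := hUne
      have hle := le_iSup (fun h : ↥(polyU R r) =>
        ((d ⬝ᵥ (P *ᵥ (h : Fin m → ℝ) + q) : ℝ) : EReal)) h0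
      rw [← hT, hb, le_bot_iff] at hle
      exact EReal.coe_ne_bot _ hle
    have hTeq : ((T.toReal : ℝ) : EReal) = T := EReal.coe_toReal htop hbot
    set t : ℝ := T.toReal with ht
    have hle : ∀ h ∈ polyU R r, d ⬝ᵥ (P *ᵥ h + q) ≤ t := by
      intro h hh
      have h2 := le_iSup (fun h : ↥(polyU R r) =>
        ((d ⬝ᵥ (P *ᵥ (h : Fin m → ℝ) + q) : ℝ) : EReal)) ⟨h, hh⟩
      rw [← hT, ← hTeq] at h2
      exact_mod_cast h2
    obtain ⟨Q, s, hQfeas, hQobj⟩ := primal_to_dual hU hUbdd x P q t hfeas hle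
    rw [zdAff]
    refine le_trans (iInf_le _ ⟨(x, Q, s), hx, hQfeas⟩) ?_
    simp only
    refine add_le_add_right ?_ _
    rw [← hTeq]
    refine iSup_le fun w => ?_
    exact EReal.coe_le_coe_iff.mpr (hQobj w w.2)
end

section
/- Suppose the dualized uncertainty set W = {w ∈ ℝ^m : w ≥ 0, Bᵀw ≤ d} is a simplex, i.e., W = conv({0, w¹, …, w^m}) for some linearly independent vectors w¹, …, w^m ∈ ℝ^m with nonnegative entries, and suppose U is nonempty. Then affine policies are optimal for the dualized adjustable problem: z_dAff(B) = z_dAR(B). -/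
open Matrix MeasureTheory ProbabilityTheory

open Matrix

private lemma ereal_le_of_forall_pos {a b : EReal}
    (h : ∀ ε : ℝ, 0 < ε → a ≤ b + (ε : EReal)) : a ≤ b := by
  induction b with
  | bot =>
    have := h 1 one_pos
    rwa [show (⊥ : EReal) + ((1:ℝ) : EReal) = ⊥ from EReal.bot_add _] at this
  | coe x =>
    induction a with
    | bot => exact bot_le
    | coe y =>
      have h' : ∀ ε : ℝ, 0 < ε → y ≤ x + ε := by
        intro ε hε
        have := h ε hε
        rw [← EReal.coe_add] at this
        exact_mod_cast this
      exact_mod_cast le_of_forall_pos_le_add h'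
    | top =>
      exfalso
      have := h 1 one_pos
      rw [← EReal.coe_add] at this
      exact (EReal.coe_lt_top (x + 1)).not_ge this
  | top => exact le_top

private lemma dot_sum_smul {L : ℕ} {ι : Type*} [Fintype ι] [DecidableEq ι] (r : Fin L → ℝ) (t : ι → ℝ) (g : ι → Fin L → ℝ) :
    r ⬝ᵥ (∑ i, t i • g i) = ∑ i, t i * (r ⬝ᵥ g i) := by
  induction (Finset.univ : Finset ι) using Finset.induction with
  | empty => simp
  | insert a s h ih =>
    simp only [Finset.sum_insert h, dotProduct_add, ih, dotProduct_smul,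
      smul_eq_mul]

private lemma mulVec_sum_smul {a b : ℕ} {ι : Type*} [Fintype ι] (M : Matrix (Fin a) (Fin b) ℝ) (t : ι → ℝ)
    (g : ι → Fin b → ℝ) :
    M *ᵥ (∑ i, t i • g i) = ∑ i, t i • (M *ᵥ g i) := by
  rw [show M *ᵥ (∑ i, t i • g i) = M.mulVecLin (∑ i, t i • g i) from rfl, map_sum]
  simp

private lemma simplex_rep {m : ℕ} (w : Fin m → Fin m → ℝ) {v : Fin m → ℝ}
    (hv : v ∈ convexHull ℝ (insert 0 (Set.range w))) :
    ∃ t : Fin m → ℝ, (∀ i, 0 ≤ t i) ∧ (∑ i, t i) ≤ 1 ∧ v = ∑ i, t i • w i := by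
  set K : Set (Fin m → ℝ) :=
    {v | ∃ t : Fin m → ℝ, (∀ i, 0 ≤ t i) ∧ (∑ i, t i) ≤ 1 ∧ v = ∑ i, t i • w i} with hKdef
  have hK : Convex ℝ K := by
    rintro v1 ⟨t1, ht1, hs1, rfl⟩ v2 ⟨t2, ht2, hs2, rfl⟩ a b ha hb hab
    refine ⟨fun i => a * t1 i + b * t2 i, fun i => add_nonneg (mul_nonneg ha (ht1 i)) (mul_nonneg hb (ht2 i)), ?_, ?_⟩
    · calc ∑ i, (a * t1 i + b * t2 i)
          = a * ∑ i, t1 i + b * ∑ i, t2 i := by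
            rw [Finset.sum_add_distrib, Finset.mul_sum, Finset.mul_sum]
        _ ≤ a * 1 + b * 1 :=
            add_le_add (mul_le_mul_of_nonneg_left hs1 ha) (mul_le_mul_of_nonneg_left hs2 hb)
        _ = 1 := by rw [mul_one, mul_one, hab]
    · rw [Finset.smul_sum, Finset.smul_sum, ← Finset.sum_add_distrib]
      exact Finset.sum_congr rfl fun i _ => by rw [smul_smul, smul_smul, add_smul]
  have hsub : insert 0 (Set.range w) ⊆ K := by
    rintro v (rfl | ⟨j, rfl⟩)
    · exact ⟨0, fun i => le_rfl, by simp, by simp⟩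
    · refine ⟨fun i => if i = j then 1 else 0, fun i => by dsimp only; split <;> norm_num, by simp, ?_⟩
      simp [ite_smul]
  exact convexHull_min hsub hK hv
/-- If the dualized uncertainty set `W = {w ≥ 0 | Bᵀ w ≤ d}` is a simplex,
i.e. the convex hull of `0` together with `m` linearly independent nonnegative vectors,
and `U` is nonempty, then affine policies are optimal for the dualized adjustable
problem: `z_dAff(B) = z_dAR(B)`. -/
theorem dualized_affine_optimal_of_simplex {m n L : ℕ} (hm : 0 < m) (hn : 0 < n) (hL : 0 < L)
    (c d : Fin n → ℝ) (A B : Matrix (Fin m) (Fin n) ℝ)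
    (R : Matrix (Fin L) (Fin m) ℝ) (r : Fin L → ℝ)
    (hc : 0 ≤ c) (hd : 0 ≤ d) (hA : ∀ i j, 0 ≤ A i j) (hB : ∀ i j, 0 ≤ B i j)
    (hR : ∀ i j, 0 ≤ R i j) (hr : 0 ≤ r)
    (hU : (polyU R r).Nonempty)
    (w : Fin m → (Fin m → ℝ)) (hw_indep : LinearIndependent ℝ w)
    (hw_nonneg : ∀ i, 0 ≤ w i)
    (hW_simplex : dualW B d = convexHull ℝ (insert 0 (Set.range w))) :
    zdAff c d A B R r = zdAR c d A B R r := by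
  haveI : Nonempty (Fin m) := ⟨⟨0, hm⟩⟩
  have h0W : (0 : Fin m → ℝ) ∈ dualW B d := by
    refine ⟨le_rfl, ?_⟩
    rw [Matrix.mulVec_zero]
    exact hd
  have hwW : ∀ i, w i ∈ dualW B d := by
    intro i
    rw [hW_simplex]
    exact subset_convexHull ℝ _ (Set.mem_insert_of_mem _ ⟨i, rfl⟩)
  have hrep : ∀ v ∈ dualW B d,
      ∃ t : Fin m → ℝ, (∀ i, 0 ≤ t i) ∧ (∑ i, t i) ≤ 1 ∧ v = ∑ i, t i • w i := by
    intro v hv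
    rw [hW_simplex] at hv
    exact simplex_rep w hv
  refine le_antisymm ?_ ?_
  · -- zdAff ≤ zdAR
    by_cases hP : ∀ v ∈ dualW B d, ∃ l : Fin L → ℝ, 0 ≤ l ∧ v ≤ Rᵀ *ᵥ l
    · -- main case
      rw [zdAR]
      refine le_iInf ?_
      intro x
      set xv : Fin n → ℝ := (x : Fin n → ℝ) with hxv
      set F : dualW B d → EReal := fun wv =>
        ⨅ l : {l : Fin L → ℝ // 0 ≤ l ∧ (wv : Fin m → ℝ) ≤ Rᵀ *ᵥ l},
          ((-(A *ᵥ xv) ⬝ᵥ (wv : Fin m → ℝ) + r ⬝ᵥ (l : Fin L → ℝ) : ℝ) : EReal) with hF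
      refine ereal_le_of_forall_pos ?_
      intro ε hε
      set G : Fin m → EReal := fun i => F ⟨w i, hwW i⟩ with hG
      -- each G i is a real number
      have hGbot : ∀ i, ((-(A *ᵥ xv) ⬝ᵥ w i : ℝ) : EReal) ≤ G i := by
        intro i
        refine le_iInf ?_
        rintro ⟨l, hl0, -⟩
        have : (0:ℝ) ≤ r ⬝ᵥ l := Finset.sum_nonneg fun j _ => mul_nonneg (hr j) (hl0 j)
        exact_mod_cast le_add_of_nonneg_right this
      have hGtop : ∀ i, G i < ⊤ := by
        intro i
        obtain ⟨l0, hl00, hl0R⟩ := hP (w i) (hwW i)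
        calc G i ≤ ((-(A *ᵥ xv) ⬝ᵥ w i + r ⬝ᵥ l0 : ℝ) : EReal) :=
              iInf_le_of_le ⟨l0, hl00, hl0R⟩ le_rfl
          _ < ⊤ := EReal.coe_lt_top _
      have hGcoe : ∀ i, G i = (((G i).toReal : ℝ) : EReal) := by
        intro i
        exact (EReal.coe_toReal (hGtop i).ne (lt_of_lt_of_le (EReal.bot_lt_coe _) (hGbot i)).ne').symm
      -- choose near-optimal l at each vertex
      have key : ∀ i : Fin m, ∃ l : Fin L → ℝ, 0 ≤ l ∧ w i ≤ Rᵀ *ᵥ l ∧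
          -(A *ᵥ xv) ⬝ᵥ w i + r ⬝ᵥ l ≤ (G i).toReal + ε := by
        intro i
        have hlt : G i < (((G i).toReal + ε : ℝ) : EReal) := by
          rw [hGcoe i]
          exact_mod_cast lt_add_of_pos_right _ hε
        obtain ⟨⟨l, hl0, hlR⟩, hval⟩ := iInf_lt_iff.mp hlt
        exact ⟨l, hl0, hlR, le_of_lt (by exact_mod_cast hval)⟩
      choose lv hlv0 hlvR hlvval using key
      -- build the affine policy
      haveI : Nonempty (Fin m) := ⟨⟨0, hm⟩⟩
      set b : Module.Basis (Fin m) ℝ (Fin m → ℝ) :=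
        basisOfLinearIndependentOfCardEqFinrank hw_indep (by simp) with hb
      have hbw : ∀ i, b i = w i := by
        intro i
        rw [hb, coe_basisOfLinearIndependentOfCardEqFinrank]
      set f : (Fin m → ℝ) →ₗ[ℝ] (Fin L → ℝ) := b.constr ℝ lv with hfdef
      set Q : Matrix (Fin L) (Fin m) ℝ := LinearMap.toMatrix' f with hQdef
      have hQ : ∀ v, Q *ᵥ v = f v := by
        intro v
        rw [hQdef, ← Matrix.toLin'_apply, Matrix.toLin'_toMatrix']
      have hfw : ∀ i, f (w i) = lv i := by
        intro i
        rw [← hbw i, hfdef]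
        exact b.constr_basis ℝ lv i
      have hQv : ∀ (t : Fin m → ℝ), Q *ᵥ (∑ i, t i • w i) = ∑ i, t i • lv i := by
        intro t
        rw [hQ, map_sum]
        exact Finset.sum_congr rfl fun i _ => by rw [LinearMap.map_smul, hfw]
      -- feasibility
      have hfeas : ∀ v ∈ dualW B d, 0 ≤ Q *ᵥ v + 0 ∧ v ≤ Rᵀ *ᵥ (Q *ᵥ v + 0) := by
        intro v hv
        obtain ⟨t, ht0, hts, htv⟩ := hrep v hv
        rw [add_zero, htv, hQv]
        constructor
        · intro j
          rw [Finset.sum_apply]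
          exact Finset.sum_nonneg fun i _ => mul_nonneg (ht0 i) (hlv0 i j)
        · rw [mulVec_sum_smul]
          intro j
          rw [Finset.sum_apply, Finset.sum_apply]
          refine Finset.sum_le_sum fun i _ => ?_
          exact mul_le_mul_of_nonneg_left (hlvR i j) (ht0 i)
      rw [zdAff]
      refine le_trans (iInf_le _ ⟨(xv, Q, 0), x.2, hfeas⟩) ?_
      -- bound the sup
      set M : ℝ := max 0 (Finset.univ.sup' Finset.univ_nonempty
        (fun i => (G i).toReal + ε)) with hM
      have hsupM : (⨆ v : dualW B d,
          ((-(A *ᵥ xv) ⬝ᵥ (v : Fin m → ℝ) + r ⬝ᵥ (Q *ᵥ (v : Fin m → ℝ) + 0) : ℝ) : EReal))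
          ≤ (M : EReal) := by
        refine iSup_le ?_
        rintro ⟨v, hv⟩
        obtain ⟨t, ht0, hts, htv⟩ := hrep v hv
        have hval : -(A *ᵥ xv) ⬝ᵥ v + r ⬝ᵥ (Q *ᵥ v + 0)
            = ∑ i, t i * (-(A *ᵥ xv) ⬝ᵥ w i + r ⬝ᵥ lv i) := by
          rw [add_zero, htv, hQv, dot_sum_smul, dot_sum_smul, ← Finset.sum_add_distrib]
          exact Finset.sum_congr rfl fun i _ => by ring
        have hle : -(A *ᵥ xv) ⬝ᵥ v + r ⬝ᵥ (Q *ᵥ v + 0) ≤ M := by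
          rw [hval]
          have hMnn : (0:ℝ) ≤ M := le_max_left _ _
          calc ∑ i, t i * (-(A *ᵥ xv) ⬝ᵥ w i + r ⬝ᵥ lv i) ≤ ∑ i, t i * M := by
                refine Finset.sum_le_sum fun i _ => ?_
                refine mul_le_mul_of_nonneg_left ?_ (ht0 i)
                refine le_trans (hlvval i) (le_trans ?_ (le_max_right _ _))
                exact Finset.le_sup' (fun i => (G i).toReal + ε) (Finset.mem_univ i)
            _ = (∑ i, t i) * M := by rw [Finset.sum_mul]
            _ ≤ 1 * M := mul_le_mul_of_nonneg_right hts hMnn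
            _ = M := one_mul M
        exact_mod_cast hle
      have hSnn : (0 : EReal) ≤ ⨆ wv, F wv := by
        refine le_trans ?_ (le_iSup F ⟨0, h0W⟩)
        refine le_iInf ?_
        rintro ⟨l, hl0, -⟩
        have h1 : -(A *ᵥ xv) ⬝ᵥ (((⟨0, h0W⟩ : dualW B d) : Fin m → ℝ)) + r ⬝ᵥ l = r ⬝ᵥ l := by
          show -(A *ᵥ xv) ⬝ᵥ (0 : Fin m → ℝ) + r ⬝ᵥ l = r ⬝ᵥ l
          rw [dotProduct_zero, zero_add]
        rw [h1]
        have : (0:ℝ) ≤ r ⬝ᵥ l := Finset.sum_nonneg fun j _ => mul_nonneg (hr j) (hl0 j)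
        exact_mod_cast this
      have hMS : (M : EReal) ≤ (⨆ wv, F wv) + (ε : EReal) := by
        obtain ⟨i0, hi0⟩ := Finset.exists_mem_eq_sup' Finset.univ_nonempty
          (fun i => (G i).toReal + ε)
        rcases max_choice 0 (Finset.univ.sup' Finset.univ_nonempty
            (fun i => (G i).toReal + ε)) with hc0 | hc1
        · rw [hM, hc0]
          calc (0:EReal) ≤ (⨆ wv, F wv) + 0 := by rw [add_zero]; exact hSnn
            _ ≤ (⨆ wv, F wv) + (ε : EReal) := by
                refine add_le_add_right ?_ _
                exact_mod_cast le_of_lt hε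
        · rw [hM, hc1, hi0.2]
          have : (((G i0).toReal + ε : ℝ) : EReal) = G i0 + (ε : EReal) := by
            rw [EReal.coe_add, ← hGcoe i0]
          rw [this]
          exact add_le_add_left (le_iSup F ⟨w i0, hwW i0⟩) _
      calc ((c ⬝ᵥ xv : ℝ) : EReal) + (⨆ v : dualW B d,
            ((-(A *ᵥ xv) ⬝ᵥ (v : Fin m → ℝ) + r ⬝ᵥ (Q *ᵥ (v : Fin m → ℝ) + 0) : ℝ) : EReal))
          ≤ ((c ⬝ᵥ xv : ℝ) : EReal) + (M : EReal) := add_le_add_right hsupM _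
        _ ≤ ((c ⬝ᵥ xv : ℝ) : EReal) + ((⨆ wv, F wv) + (ε : EReal)) := add_le_add_right hMS _
        _ = (((c ⬝ᵥ xv : ℝ) : EReal) + (⨆ wv, F wv)) + (ε : EReal) := by rw [add_assoc]
    · -- infeasible case: zdAR = ⊤
      push_neg at hP
      obtain ⟨v, hv, hnl⟩ := hP
      have htop : zdAR c d A B R r = ⊤ := by
        rw [zdAR, iInf_eq_top]
        intro x
        haveI : IsEmpty {l : Fin L → ℝ // 0 ≤ l ∧
            ((⟨v, hv⟩ : dualW B d) : Fin m → ℝ) ≤ Rᵀ *ᵥ l} := by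
          refine ⟨?_⟩
          rintro ⟨l, hl0, hlR⟩
          exact hnl l hl0 hlR
        have hsup : (⨆ wv : dualW B d,
            ⨅ l : {l : Fin L → ℝ // 0 ≤ l ∧ (wv : Fin m → ℝ) ≤ Rᵀ *ᵥ l},
              ((-(A *ᵥ (x : Fin n → ℝ)) ⬝ᵥ (wv : Fin m → ℝ) + r ⬝ᵥ (l : Fin L → ℝ) : ℝ) : EReal))
            = ⊤ := by
          refine top_unique ?_
          refine le_iSup_of_le ⟨v, hv⟩ ?_
          rw [iInf_of_empty]
        rw [hsup]
        exact EReal.add_top_of_ne_bot (EReal.coe_ne_bot _)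
      rw [htop]
      exact le_top
  · -- zdAR ≤ zdAff
    rw [zdAff, zdAR]
    refine le_iInf ?_
    rintro ⟨⟨xv, Q, s⟩, hx, hfeas⟩
    refine iInf_le_of_le ⟨xv, hx⟩ ?_
    refine add_le_add_right ?_ _
    refine iSup_mono ?_
    rintro ⟨v, hv⟩
    obtain ⟨h1, h2⟩ := hfeas v hv
    exact iInf_le_of_le ⟨Q *ᵥ v + s, h1, h2⟩ le_rfl
end

section
/- Let b > 0, μ ∈ (0, b], d̄ > 0, m ≥ 2, n ≥ 1, and suppose the entries B̃_ij of the random matrix B̃ are i.i.d. real random variables taking values in [0, b] with mean μ. Suppose d = d̄·e (e the all-ones vector in ℝ^n), U = {h ∈ ℝ^m : h ≥ 0, R h ≤ r} is nonempty and bounded, and ε := (b/μ)·√((log m)/n) satisfies ε < 1. Then with probability at least 1 − 1/m, z_AR(B̃) ≤ z_Aff(B̃) ≤ (b/(μ(1−ε)))·z_AR(B̃). -/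
open Matrix MeasureTheory ProbabilityTheory

lemma aux_key {p : ℝ} (hp0 : 0 ≤ p) (hp1 : p ≤ 1) (u : ℝ) :
    1 - p + p * Real.exp u ≤ Real.exp (p * u + u ^ 2 / 8) := by
  set D : ℝ → ℝ := fun v => 1 - p + p * Real.exp v with hDdef
  have hD : ∀ v, 0 < D v := by
    intro v
    rcases eq_or_lt_of_le hp0 with h | h
    · simp [hDdef, ← h]
    · have := Real.exp_pos v
      have : 0 < p * Real.exp v := mul_pos h this
      simp only [hDdef]
      nlinarith
  have hDd : ∀ v, HasDerivAt D (p * Real.exp v) v := by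
    intro v
    exact ((Real.hasDerivAt_exp v).const_mul p).const_add (1 - p)
  set f : ℝ → ℝ := fun v => p * v + v ^ 2 / 8 - Real.log (D v) with hfdef
  set f' : ℝ → ℝ := fun v => p + v / 4 - p * Real.exp v / D v with hf'def
  have hfd : ∀ v, HasDerivAt f (f' v) v := by
    intro v
    have h1 : HasDerivAt (fun v : ℝ => p * v + v ^ 2 / 8) (p + v * 2 / 8 * 1) v := by
      have := ((hasDerivAt_pow 2 v).div_const 8).const_add 0
      have h2 : HasDerivAt (fun v : ℝ => p * v) p v := by
        simpa using (hasDerivAt_id v).const_mul p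
      exact (h2.add ((hasDerivAt_pow 2 v).div_const 8)).congr_deriv (by simp; ring)
    have h2 : HasDerivAt (fun v => Real.log (D v)) (p * Real.exp v / D v) v :=
      (hDd v).log (hD v).ne'
    have := h1.sub h2
    refine this.congr_deriv ?_
    simp only [hf'def, mul_one]
    ring
  have hf'd : ∀ v, HasDerivAt f'
      (1 / 4 - (p * Real.exp v * D v - p * Real.exp v * (p * Real.exp v)) / (D v) ^ 2) v := by
    intro v
    have h1 : HasDerivAt (fun v : ℝ => p + v / 4) (1 / 4) v := by
      simpa using ((hasDerivAt_id v).div_const 4).const_add p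
    have h2 : HasDerivAt (fun v => p * Real.exp v / D v)
        ((p * Real.exp v * D v - p * Real.exp v * (p * Real.exp v)) / (D v) ^ 2) v := by
      have := ((Real.hasDerivAt_exp v).const_mul p).div (hDd v) (hD v).ne'
      exact this
    exact h1.sub h2
  have hf''_nonneg : ∀ v,
      0 ≤ 1 / 4 - (p * Real.exp v * D v - p * Real.exp v * (p * Real.exp v)) / (D v) ^ 2 := by
    intro v
    obtain ⟨a, ha⟩ : ∃ a, a = p * Real.exp v := ⟨_, rfl⟩
    obtain ⟨d, hdd⟩ : ∃ d, d = D v := ⟨_, rfl⟩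
    have ha0 : 0 ≤ a := ha ▸ mul_nonneg hp0 (Real.exp_pos v).le
    have had : a ≤ d := by rw [ha, hdd]; simp only [hDdef]; nlinarith
    have hd : 0 < d := hdd ▸ hD v
    rw [← ha, ← hdd]
    have : (a * d - a * a) / d ^ 2 ≤ 1 / 4 := by
      rw [div_le_iff₀ (by positivity)]
      nlinarith [sq_nonneg (d - 2 * a)]
    linarith
  have hf'mono : Monotone f' := by
    apply monotone_of_deriv_nonneg (fun v => (hf'd v).differentiableAt)
    intro v
    rw [(hf'd v).deriv]
    exact hf''_nonneg v
  have hf'0 : f' 0 = 0 := by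
    simp only [hf'def, hDdef]
    norm_num [Real.exp_zero]
  have hf0 : f 0 = 0 := by
    simp only [hfdef, hDdef]
    norm_num [Real.exp_zero]
  have hfnonneg : ∀ v, 0 ≤ f v := by
    intro v
    rcases le_total 0 v with h | h
    · have hmono : MonotoneOn f (Set.Ici 0) := by
        apply monotoneOn_of_deriv_nonneg (convex_Ici 0)
          (fun x _ => (hfd x).differentiableAt.continuousAt.continuousWithinAt)
          (fun x _ => (hfd x).differentiableAt.differentiableWithinAt)
        intro x hx
        rw [(hfd x).deriv]
        rw [interior_Ici] at hx
        have := hf'mono (le_of_lt hx)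
        rw [hf'0] at this
        exact this
      have := hmono Set.self_mem_Ici h h
      rwa [hf0] at this
    · have hanti : AntitoneOn f (Set.Iic 0) := by
        apply antitoneOn_of_deriv_nonpos (convex_Iic 0)
          (fun x _ => (hfd x).differentiableAt.continuousAt.continuousWithinAt)
          (fun x _ => (hfd x).differentiableAt.differentiableWithinAt)
        intro x hx
        rw [(hfd x).deriv]
        rw [interior_Iic] at hx
        have := hf'mono (le_of_lt hx)
        rw [hf'0] at this
        exact this
      have := hanti h Set.self_mem_Iic h
      rwa [hf0] at this
  have := hfnonneg u
  have hlog : Real.log (D u) ≤ p * u + u ^ 2 / 8 := by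
    simp only [hfdef] at this; linarith
  have := (Real.log_le_iff_le_exp (hD u)).mp hlog
  simpa [hDdef] using this

lemma aux_mgf {Ω : Type} [MeasurableSpace Ω] (Pr : Measure Ω) [IsProbabilityMeasure Pr]
    (X : Ω → ℝ) (hXm : Measurable X) {b : ℝ} (hb : 0 < b)
    (hX : ∀ ω, X ω ∈ Set.Icc (0 : ℝ) b) (t : ℝ) :
    mgf X Pr t ≤ Real.exp (t * (∫ ω, X ω ∂Pr) + t ^ 2 * b ^ 2 / 8) := by
  have hint : Integrable X Pr := by
    refine (integrable_const b).mono' hXm.aestronglyMeasurable (ae_of_all _ fun ω => ?_)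
    have := hX ω
    rw [Real.norm_eq_abs, abs_le]
    constructor <;> [linarith [this.1, hb.le]; exact this.2]
  set m := ∫ ω, X ω ∂Pr with hm
  have hm0 : 0 ≤ m := integral_nonneg fun ω => (hX ω).1
  have hmb : m ≤ b := by
    have h2 : ∫ (_ : Ω), b ∂Pr = b := by simp
    rw [hm, ← h2]
    exact integral_mono hint (integrable_const b) fun ω => (hX ω).2
  have hp0 : 0 ≤ m / b := div_nonneg hm0 hb.le
  have hp1 : m / b ≤ 1 := (div_le_one hb).mpr hmb
  -- pointwise convexity bound
  have hpt : ∀ ω, Real.exp (t * X ω) ≤ 1 + X ω * ((Real.exp (t * b) - 1) / b) := by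
    intro ω
    have hθ0 : 0 ≤ X ω / b := div_nonneg (hX ω).1 hb.le
    have hθ1 : X ω / b ≤ 1 := (div_le_one hb).mpr (hX ω).2
    have h := convexOn_exp.2 (Set.mem_univ (0 : ℝ)) (Set.mem_univ (t * b))
      (by linarith : (0:ℝ) ≤ 1 - X ω / b) hθ0 (by ring)
    simp only [smul_eq_mul, mul_zero, zero_add, Real.exp_zero, mul_one] at h
    have h1 : X ω / b * (t * b) = t * X ω := by field_simp
    rw [h1] at h
    have h2 : (1 - X ω / b) + X ω / b * Real.exp (t * b)
        = 1 + X ω * ((Real.exp (t * b) - 1) / b) := by field_simp; ring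
    linarith [h, h2.le]
  have hintexp : Integrable (fun ω => Real.exp (t * X ω)) Pr := by
    refine (integrable_const (Real.exp (|t| * b))).mono'
      ((hXm.const_mul t).exp).aestronglyMeasurable (ae_of_all _ fun ω => ?_)
    rw [Real.norm_eq_abs, abs_of_pos (Real.exp_pos _), Real.exp_le_exp]
    calc t * X ω ≤ |t| * X ω := mul_le_mul_of_nonneg_right (le_abs_self t) (hX ω).1
      _ ≤ |t| * b := mul_le_mul_of_nonneg_left (hX ω).2 (abs_nonneg t)
  have hintrhs : Integrable (fun ω => 1 + X ω * ((Real.exp (t * b) - 1) / b)) Pr :=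
    (integrable_const 1).add (hint.mul_const _)
  have hstep : mgf X Pr t ≤ 1 + m * ((Real.exp (t * b) - 1) / b) := by
    have := integral_mono hintexp hintrhs hpt
    rw [mgf]
    refine this.trans_eq ?_
    rw [integral_add (integrable_const 1) (hint.mul_const _), integral_mul_const]
    simp
    exact Or.inl hm.symm
  have hkey := aux_key hp0 hp1 (t * b)
  have heq1 : 1 - m / b + m / b * Real.exp (t * b) = 1 + m * ((Real.exp (t * b) - 1) / b) := by
    field_simp; ring
  have heq2 : m / b * (t * b) + (t * b) ^ 2 / 8 = t * m + t ^ 2 * b ^ 2 / 8 := by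
    field_simp
  rw [heq1, heq2] at hkey
  exact hstep.trans hkey

lemma aux_row_indep {m n : ℕ} {Ω : Type} [MeasurableSpace Ω] {Pr : Measure Ω}
    [IsProbabilityMeasure Pr] {Bt : Fin m → Fin n → Ω → ℝ}
    (hindep : iIndepFun
      (fun p : Fin m × Fin n => Bt p.1 p.2) Pr) (i : Fin m) :
    iIndepFun (fun j => Bt i j) Pr := by
  rw [iIndepFun_iff_measure_inter_preimage_eq_mul]
  intro S sets hS
  classical
  have hchar := (iIndepFun_iff_measure_inter_preimage_eq_mul.mp hindep)
    (S.image (fun j => (i, j)))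
    (sets := fun p => if p.1 = i then sets p.2 else Set.univ)
    (fun p hp => by
      rcases Finset.mem_image.mp hp with ⟨j, hj, rfl⟩
      simpa using hS j hj)
  have hinj : ∀ (a : Fin n), a ∈ S → ∀ (b : Fin n), b ∈ S →
      (fun j => ((i, j) : Fin m × Fin n)) a = (fun j => (i, j)) b → a = b := by
    intro a _ b _ h
    simpa using h
  rw [Finset.prod_image hinj] at hchar
  have hsets : ∀ j ∈ S,
      (fun ω => Bt i j ω) ⁻¹' (if (i : Fin m) = i then sets j else Set.univ)
        = Bt i j ⁻¹' sets j := by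
    intro j _; simp
  calc Pr (⋂ j ∈ S, Bt i j ⁻¹' sets j)
      = Pr (⋂ p ∈ S.image (fun j => (i, j)),
          Bt p.1 p.2 ⁻¹' (if p.1 = i then sets p.2 else Set.univ)) := by
        congr 1
        ext ω
        simp only [Set.mem_iInter, Finset.mem_image]
        constructor
        · rintro h p ⟨j, hj, rfl⟩
          simpa using h j hj
        · intro h j hj
          simpa using h (i, j) ⟨j, hj, rfl⟩
    _ = ∏ j ∈ S, Pr (Bt i j ⁻¹' sets j) := by
        rw [hchar]
        exact Finset.prod_congr rfl fun j hj => by simp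

lemma aux_int_exp {Ω : Type} [MeasurableSpace Ω] (Pr : Measure Ω) [IsProbabilityMeasure Pr]
    (X : Ω → ℝ) (hXm : Measurable X) (C t : ℝ) (hX : ∀ ω, |X ω| ≤ C) :
    Integrable (fun ω => Real.exp (t * X ω)) Pr := by
  refine (integrable_const (Real.exp (|t| * C))).mono'
    ((hXm.const_mul t).exp).aestronglyMeasurable (ae_of_all _ fun ω => ?_)
  rw [Real.norm_eq_abs, abs_of_pos (Real.exp_pos _), Real.exp_le_exp]
  calc t * X ω ≤ |t * X ω| := le_abs_self _
    _ = |t| * |X ω| := abs_mul t (X ω)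
    _ ≤ |t| * C := mul_le_mul_of_nonneg_left (hX ω) (abs_nonneg t)

lemma aux_tail {m n : ℕ} (hm : 2 ≤ m) (hn : 1 ≤ n)
    {Ω : Type} [MeasurableSpace Ω] (Pr : Measure Ω) [IsProbabilityMeasure Pr]
    (Bt : Fin m → Fin n → Ω → ℝ) (hmeas : ∀ i j, Measurable (Bt i j))
    (hindep : iIndepFun
      (fun p : Fin m × Fin n => Bt p.1 p.2) Pr)
    {b μ : ℝ} (hb : 0 < b) (hμ : 0 < μ)
    (hbdd : ∀ i j ω, Bt i j ω ∈ Set.Icc (0 : ℝ) b)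
    (hmean : ∀ i j, ∫ ω, Bt i j ω ∂Pr = μ)
    {ε : ℝ} (hε : ε = (b / μ) * Real.sqrt (Real.log m / n)) (i : Fin m) :
    (Pr {ω | ∑ j, Bt i j ω ≤ (n : ℝ) * (μ * (1 - ε))}).toReal ≤ ((m : ℝ) ^ 2)⁻¹ := by
  have hm1 : (1 : ℝ) ≤ (m : ℝ) := by exact_mod_cast Nat.one_le_of_lt hm
  have hn0 : (0 : ℝ) < (n : ℝ) := by exact_mod_cast hn
  have hlog : 0 ≤ Real.log m := Real.log_nonneg hm1
  have hεnn : 0 ≤ ε := by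
    rw [hε]
    positivity
  have hε2 : (n : ℝ) * (μ ^ 2 * ε ^ 2 / b ^ 2) = Real.log m := by
    rw [hε]
    rw [mul_pow, Real.sq_sqrt (by positivity)]
    field_simp
  set t : ℝ := -(4 * μ * ε / b ^ 2) with ht
  have ht0 : t ≤ 0 := by
    rw [ht]
    have : 0 ≤ 4 * μ * ε / b ^ 2 := by positivity
    linarith
  set X : Fin n → Ω → ℝ := fun j => Bt i j with hX
  have hXm : ∀ j, Measurable (X j) := fun j => hmeas i j
  have hintj : ∀ j, Integrable (fun ω => Real.exp (t * X j ω)) Pr := fun j =>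
    aux_int_exp Pr (X j) (hXm j) b t fun ω => by
      have := hbdd i j ω
      rw [abs_le]; exact ⟨by linarith [this.1, hb.le], this.2⟩
  have hsum_meas : Measurable (∑ j ∈ Finset.univ, X j) := by
    have := Finset.measurable_sum Finset.univ fun (j : Fin n) (_ : j ∈ Finset.univ) => hXm j
    convert this using 1
    ext ω
    simp
  have hint_sum : Integrable (fun ω => Real.exp (t * (∑ j ∈ Finset.univ, X j) ω)) Pr := by
    apply aux_int_exp Pr _ hsum_meas ((n : ℝ) * b) t
    intro ω
    rw [Finset.sum_apply, abs_le]
    constructor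
    · have : 0 ≤ ∑ j, X j ω := Finset.sum_nonneg fun j _ => (hbdd i j ω).1
      nlinarith
    · calc ∑ j, X j ω ≤ ∑ _j : Fin n, b := Finset.sum_le_sum fun j _ => (hbdd i j ω).2
        _ = (n : ℝ) * b := by simp [mul_comm]
  have hchern := measure_le_le_exp_mul_mgf (μ := Pr) (X := ∑ j ∈ Finset.univ, X j)
    ((n : ℝ) * (μ * (1 - ε))) ht0 hint_sum
  have hmgf_sum : mgf (∑ j ∈ Finset.univ, X j) Pr t = ∏ j, mgf (X j) Pr t :=
    (aux_row_indep hindep i).mgf_sum hXm Finset.univ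
  have hmgf_le : ∀ j, mgf (X j) Pr t ≤ Real.exp (t * μ + t ^ 2 * b ^ 2 / 8) := by
    intro j
    have := aux_mgf Pr (X j) (hXm j) hb (fun ω => hbdd i j ω) t
    rwa [hmean i j] at this
  have hprod : ∏ j, mgf (X j) Pr t ≤ Real.exp ((n : ℝ) * (t * μ + t ^ 2 * b ^ 2 / 8)) := by
    calc ∏ j, mgf (X j) Pr t ≤ ∏ _j : Fin n, Real.exp (t * μ + t ^ 2 * b ^ 2 / 8) :=
          Finset.prod_le_prod (fun j _ => mgf_nonneg) (fun j _ => hmgf_le j)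
      _ = Real.exp ((n : ℝ) * (t * μ + t ^ 2 * b ^ 2 / 8)) := by
          rw [Finset.prod_const, ← Real.exp_nat_mul]
          simp
  have hsetseq : {ω | ∑ j, Bt i j ω ≤ (n : ℝ) * (μ * (1 - ε))}
      = {ω | (∑ j ∈ Finset.univ, X j) ω ≤ (n : ℝ) * (μ * (1 - ε))} := by
    ext ω; simp [hX]
  rw [hsetseq]
  calc (Pr {ω | (∑ j ∈ Finset.univ, X j) ω ≤ (n : ℝ) * (μ * (1 - ε))}).toReal
      ≤ Real.exp (-t * ((n : ℝ) * (μ * (1 - ε)))) * mgf (∑ j ∈ Finset.univ, X j) Pr t := hchern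
    _ ≤ Real.exp (-t * ((n : ℝ) * (μ * (1 - ε)))) *
          Real.exp ((n : ℝ) * (t * μ + t ^ 2 * b ^ 2 / 8)) := by
        apply mul_le_mul_of_nonneg_left _ (Real.exp_pos _).le
        rw [hmgf_sum]
        exact hprod
    _ = Real.exp (-t * ((n : ℝ) * (μ * (1 - ε))) + (n : ℝ) * (t * μ + t ^ 2 * b ^ 2 / 8)) := by
        rw [← Real.exp_add]
    _ = Real.exp (-(2 * Real.log m)) := by
        congr 1
        rw [← hε2, ht]
        field_simp
        ring
    _ = ((m : ℝ) ^ 2)⁻¹ := by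
        rw [Real.exp_neg, two_mul, Real.exp_add, Real.exp_log (by linarith)]
        ring_nf

lemma aux_zAR_le_zAff {m n : ℕ} (U : Set (Fin m → ℝ)) (c d : Fin n → ℝ)
    (A B : Matrix (Fin m) (Fin n) ℝ) : zAR U c d A B ≤ zAff U c d A B := by
  rw [zAR, zAff]
  apply le_iInf
  rintro ⟨⟨x, P, q⟩, hx, hfeas⟩
  refine iInf_le_of_le ⟨x, hx⟩ ?_
  apply add_le_add_right
  apply iSup_mono
  rintro ⟨h, hh⟩
  exact iInf_le_of_le ⟨P *ᵥ h + q, (hfeas h hh).1, (hfeas h hh).2⟩ (le_refl _)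

lemma aux_det_main {m n : ℕ} (hm : 0 < m) (hn : 1 ≤ n) (U : Set (Fin m → ℝ))
    (hUne : U.Nonempty) (hUbdd : Bornology.IsBounded U) (hU0 : ∀ h ∈ U, 0 ≤ h)
    (c : Fin n → ℝ) (hc : 0 ≤ c) (A : Matrix (Fin m) (Fin n) ℝ) (hA : ∀ i j, 0 ≤ A i j)
    (B : Matrix (Fin m) (Fin n) ℝ) {b σ dbar : ℝ}
    (hb : 0 < b) (hσ : 0 < σ) (hσb : σ ≤ b) (hd : 0 < dbar)
    (hB0 : ∀ i j, 0 ≤ B i j) (hBb : ∀ i j, B i j ≤ b)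
    (hrow : ∀ i, (n : ℝ) * σ ≤ ∑ j, B i j) :
    zAff U c (fun _ => dbar) A B ≤ ((b / σ : ℝ) : EReal) * zAR U c (fun _ => dbar) A B := by
  haveI : Nonempty (Fin m) := Fin.pos_iff_nonempty.mp hm
  haveI : Nonempty U := hUne.to_subtype
  have hn0 : (0 : ℝ) < (n : ℝ) := by exact_mod_cast hn
  obtain ⟨C, hC⟩ := hUbdd.exists_norm_le
  set d : Fin n → ℝ := fun _ => dbar with hdd
  -- nonnegativity of A *ᵥ x
  have hAx : ∀ x : Fin n → ℝ, 0 ≤ x → ∀ i, 0 ≤ (A *ᵥ x) i := by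
    intro x hx i
    simp only [Matrix.mulVec, dotProduct]
    exact Finset.sum_nonneg fun j _ => mul_nonneg (hA i j) (hx j)
  set φ : (Fin n → ℝ) → (Fin m → ℝ) → ℝ :=
    fun x h => max (⨆ i, (h i - (A *ᵥ x) i)) 0 with hφdef
  set S : (Fin n → ℝ) → ℝ := fun x => sSup (φ x '' U) with hSdef
  have hφ0 : ∀ x h, 0 ≤ φ x h := fun x h => le_max_right _ _
  have hbddS : ∀ x : Fin n → ℝ, 0 ≤ x → BddAbove (φ x '' U) := by
    intro x hx
    refine ⟨max C 0, ?_⟩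
    rintro - ⟨h, hh, rfl⟩
    refine max_le_max ?_ le_rfl
    refine ciSup_le fun i => ?_
    have h1 : h i ≤ C := by
      calc h i ≤ |h i| := le_abs_self _
        _ = ‖h i‖ := rfl
        _ ≤ ‖h‖ := norm_le_pi_norm h i
        _ ≤ C := hC h hh
    have := hAx x hx i
    linarith
  have hφS : ∀ x : Fin n → ℝ, 0 ≤ x → ∀ h ∈ U, φ x h ≤ S x := by
    intro x hx h hh
    exact le_csSup (hbddS x hx) (Set.mem_image_of_mem _ hh)
  have hS0 : ∀ x : Fin n → ℝ, 0 ≤ x → 0 ≤ S x := by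
    intro x hx
    obtain ⟨h0, hh0⟩ := hUne
    exact le_trans (hφ0 x h0) (hφS x hx h0 hh0)
  have hdiff : ∀ x : Fin n → ℝ, 0 ≤ x → ∀ h ∈ U, ∀ i, h i - (A *ᵥ x) i ≤ S x := by
    intro x hx h hh i
    refine le_trans ?_ (hφS x hx h hh)
    refine le_trans ?_ (le_max_left _ _)
    exact le_ciSup (f := fun i => h i - (A *ᵥ x) i) (Set.Finite.bddAbove (Set.finite_range _)) i
  have hcx0 : ∀ x : Fin n → ℝ, 0 ≤ x → 0 ≤ c ⬝ᵥ x := by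
    intro x hx
    simp only [dotProduct]
    exact Finset.sum_nonneg fun j _ => mul_nonneg (hc j) (hx j)
  -- UPPER bound on zAff
  have hupper : ∀ x : Fin n → ℝ, 0 ≤ x →
      zAff U c d A B ≤ ((c ⬝ᵥ x + dbar * S x / σ : ℝ) : EReal) := by
    intro x hx
    set q : Fin n → ℝ := fun _ => S x / ((n : ℝ) * σ) with hq
    have hq0 : 0 ≤ q := by
      intro j
      exact div_nonneg (hS0 x hx) (by positivity)
    have hBq : ∀ i, S x ≤ (B *ᵥ q) i := by
      intro i
      have h1 : (B *ᵥ q) i = (∑ j, B i j) * (S x / ((n : ℝ) * σ)) := by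
        simp only [Matrix.mulVec, dotProduct, hq, ← Finset.sum_mul]
      rw [h1]
      have h2 : (n : ℝ) * σ * (S x / ((n : ℝ) * σ)) ≤ (∑ j, B i j) * (S x / ((n : ℝ) * σ)) :=
        mul_le_mul_of_nonneg_right (hrow i) (div_nonneg (hS0 x hx) (by positivity))
      have h3 : (n : ℝ) * σ * (S x / ((n : ℝ) * σ)) = S x := by
        field_simp
      linarith
    have hfeas : ∀ h ∈ U, 0 ≤ (0 : Matrix (Fin n) (Fin m) ℝ) *ᵥ h + q ∧
        h ≤ A *ᵥ x + B *ᵥ ((0 : Matrix (Fin n) (Fin m) ℝ) *ᵥ h + q) := by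
      intro h hh
      rw [Matrix.zero_mulVec, zero_add]
      refine ⟨hq0, fun i => ?_⟩
      have := hdiff x hx h hh i
      have := hBq i
      simp only [Pi.add_apply]
      linarith
    rw [zAff]
    refine iInf_le_of_le ⟨(x, 0, q), hx, hfeas⟩ ?_
    have hobj : ∀ h : U, ((d ⬝ᵥ ((0 : Matrix (Fin n) (Fin m) ℝ) *ᵥ (h : Fin m → ℝ) + q) : ℝ) : EReal)
        = ((dbar * S x / σ : ℝ) : EReal) := by
      intro h
      rw [Matrix.zero_mulVec, zero_add]
      congr 1
      simp only [dotProduct, hdd, hq]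
      rw [Finset.sum_const, Finset.card_univ, Fintype.card_fin, nsmul_eq_mul]
      field_simp
    refine le_of_eq ?_
    calc ((c ⬝ᵥ x : ℝ) : EReal) + ⨆ h : U,
          ((d ⬝ᵥ ((0 : Matrix (Fin n) (Fin m) ℝ) *ᵥ (h : Fin m → ℝ) + q) : ℝ) : EReal)
        = ((c ⬝ᵥ x : ℝ) : EReal) + ((dbar * S x / σ : ℝ) : EReal) := by
          congr 1
          rw [iSup_congr hobj]
          exact iSup_const
      _ = ((c ⬝ᵥ x + dbar * S x / σ : ℝ) : EReal) := by rw [← EReal.coe_add]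
  -- LOWER bound on zAR
  set Z : EReal := ⨅ x : {x : Fin n → ℝ // 0 ≤ x},
    ((c ⬝ᵥ (x : Fin n → ℝ) + (dbar / b) * S x : ℝ) : EReal) with hZdef
  have hlower : Z ≤ zAR U c d A B := by
    rw [zAR, hZdef]
    apply iInf_mono
    rintro ⟨x, hx⟩
    rw [EReal.coe_add]
    apply add_le_add_right
    -- show coe ((dbar/b) * S x) ≤ ⨆ h, ⨅ y, ...
    set T : EReal := ⨆ h : U,
      ⨅ _y : {y : Fin n → ℝ // 0 ≤ y ∧ (h : Fin m → ℝ) ≤ A *ᵥ x + B *ᵥ y},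
        ((d ⬝ᵥ (_y : Fin n → ℝ) : ℝ) : EReal) with hTdef
    have hTlb : ∀ h : U, (((dbar / b) * φ x (h : Fin m → ℝ) : ℝ) : EReal) ≤ T := by
      intro h
      refine le_trans ?_ (le_iSup _ h)
      apply le_iInf
      rintro ⟨y, hy, hyfeas⟩
      rw [EReal.coe_le_coe_iff]
      have hsumy : 0 ≤ ∑ j, y j := Finset.sum_nonneg fun j _ => hy j
      have hφy : φ x (h : Fin m → ℝ) ≤ b * ∑ j, y j := by
        refine max_le ?_ (by positivity)
        refine ciSup_le fun i => ?_
        have h1 : (h : Fin m → ℝ) i ≤ (A *ᵥ x) i + (B *ᵥ y) i := hyfeas i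
        have h2 : (B *ᵥ y) i ≤ b * ∑ j, y j := by
          simp only [Matrix.mulVec, dotProduct, Finset.mul_sum]
          exact Finset.sum_le_sum fun j _ => mul_le_mul_of_nonneg_right (hBb i j) (hy j)
        linarith
      have hdy : d ⬝ᵥ y = dbar * ∑ j, y j := by
        simp only [dotProduct, hdd, Finset.mul_sum]
      rw [hdy]
      calc (dbar / b) * φ x (h : Fin m → ℝ) ≤ (dbar / b) * (b * ∑ j, y j) :=
            mul_le_mul_of_nonneg_left hφy (by positivity)
        _ = dbar * ∑ j, y j := by field_simp
    rcases eq_top_or_lt_top T with hT | hT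
    · rw [hT]; exact le_top
    · have hTne : T ≠ ⊤ := hT.ne
      have hTbot : T ≠ ⊥ := by
        obtain ⟨h0⟩ := (inferInstance : Nonempty U)
        exact fun hbot => by
          have := hTlb h0
          rw [hbot, le_bot_iff] at this
          exact (EReal.coe_ne_bot _) this
      have hcoeT : ((T.toReal : ℝ) : EReal) = T := EReal.coe_toReal hTne hTbot
      have hub : ∀ h ∈ U, φ x h ≤ T.toReal * (b / dbar) := by
        intro h hh
        have := hTlb ⟨h, hh⟩
        rw [← hcoeT, EReal.coe_le_coe_iff] at this
        rw [← mul_le_mul_iff_of_pos_left (by positivity : (0:ℝ) < dbar / b)]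
        calc (dbar / b) * φ x h ≤ T.toReal := this
          _ = (dbar / b) * (T.toReal * (b / dbar)) := by field_simp
      have hSle : (dbar / b) * S x ≤ T.toReal := by
        have hS : S x ≤ T.toReal * (b / dbar) := by
          rw [hSdef]
          refine csSup_le (hUne.image _) ?_
          rintro - ⟨h, hh, rfl⟩
          exact hub h hh
        calc (dbar / b) * S x ≤ (dbar / b) * (T.toReal * (b / dbar)) :=
              mul_le_mul_of_nonneg_left hS (by positivity)
          _ = T.toReal := by field_simp
      calc (((dbar / b) * S x : ℝ) : EReal) ≤ ((T.toReal : ℝ) : EReal) :=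
            EReal.coe_le_coe_iff.mpr hSle
        _ = T := hcoeT
  -- Combination
  have hZ0 : (0 : EReal) ≤ Z := by
    rw [hZdef]
    apply le_iInf
    rintro ⟨x, hx⟩
    have : (0:ℝ) ≤ c ⬝ᵥ x + (dbar / b) * S x := by
      have := hcx0 x hx
      have := hS0 x hx
      positivity
    exact_mod_cast this
  have hZtop : Z ≠ ⊤ := by
    intro htop
    have := iInf_le (fun x : {x : Fin n → ℝ // 0 ≤ x} =>
      ((c ⬝ᵥ (x : Fin n → ℝ) + (dbar / b) * S x : ℝ) : EReal)) ⟨0, le_refl 0⟩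
    rw [← hZdef, htop, top_le_iff] at this
    exact (EReal.coe_ne_top _) this
  have hZbot : Z ≠ ⊥ := fun hbot => by
    rw [hbot] at hZ0
    exact (lt_irrefl (⊥ : EReal)) (lt_of_lt_of_le (by simp : (⊥:EReal) < 0) hZ0)
  set z : ℝ := Z.toReal with hzdef
  have hcoeZ : ((z : ℝ) : EReal) = Z := EReal.coe_toReal hZtop hZbot
  have hz0 : 0 ≤ z := by
    have := hZ0
    rw [← hcoeZ] at this
    exact_mod_cast this
  have hρ1 : 1 ≤ b / σ := (one_le_div hσ).mpr hσb
  -- key: for every δ > 0, zAff ≤ (b/σ) * (z + δ)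
  have hkey : ∀ δ : ℝ, 0 < δ → zAff U c d A B ≤ (((b / σ) * (z + δ) : ℝ) : EReal) := by
    intro δ hδ
    have hlt : Z < ((z + δ : ℝ) : EReal) := by
      rw [← hcoeZ, EReal.coe_lt_coe_iff]
      linarith
    rw [hZdef, iInf_lt_iff] at hlt
    obtain ⟨⟨x, hx⟩, hxlt⟩ := hlt
    rw [EReal.coe_lt_coe_iff] at hxlt
    refine le_trans (hupper x hx) ?_
    rw [EReal.coe_le_coe_iff]
    have h1 : c ⬝ᵥ x + dbar * S x / σ ≤ (b / σ) * (c ⬝ᵥ x + (dbar / b) * S x) := by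
      have h2 : (b / σ) * ((dbar / b) * S x) = dbar * S x / σ := by field_simp
      have h3 : c ⬝ᵥ x ≤ (b / σ) * (c ⬝ᵥ x) := le_mul_of_one_le_left (hcx0 x hx) hρ1
      nlinarith [hcx0 x hx]
    calc c ⬝ᵥ x + dbar * S x / σ ≤ (b / σ) * (c ⬝ᵥ x + (dbar / b) * S x) := h1
      _ ≤ (b / σ) * (z + δ) := mul_le_mul_of_nonneg_left hxlt.le (by positivity)
  have hmain : zAff U c d A B ≤ (((b / σ) * z : ℝ) : EReal) := by
    by_contra hcon
    push_neg at hcon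
    have hfin : zAff U c d A B ≤ (((b / σ) * (z + 1) : ℝ) : EReal) := hkey 1 one_pos
    have htop' : zAff U c d A B ≠ ⊤ := fun h => by
      rw [h, top_le_iff] at hfin
      exact (EReal.coe_ne_top _) hfin
    have hbot' : zAff U c d A B ≠ ⊥ := fun h => by
      rw [h] at hcon
      exact (lt_irrefl _ (lt_of_lt_of_le hcon bot_le))
    set w : ℝ := (zAff U c d A B).toReal with hwdef
    have hcoew : ((w : ℝ) : EReal) = zAff U c d A B := EReal.coe_toReal htop' hbot'
    have hw : (b / σ) * z < w := by
      rw [← hcoew, EReal.coe_lt_coe_iff] at hcon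
      exact hcon
    have hρ0 : 0 < b / σ := by positivity
    set δ : ℝ := (w - (b / σ) * z) / (2 * (b / σ)) with hδdef
    have hδ0 : 0 < δ := by
      rw [hδdef]
      have h5 : 0 < w - (b / σ) * z := by linarith
      positivity
    have := hkey δ hδ0
    rw [← hcoew, EReal.coe_le_coe_iff] at this
    have heq : (b / σ) * (z + δ) = (w + (b / σ) * z) / 2 := by
      rw [hδdef]
      field_simp
      ring
    rw [heq] at this
    linarith
  refine le_trans hmain ?_
  have h2 : (((b / σ) : ℝ) : EReal) * Z ≤ (((b / σ) : ℝ) : EReal) * zAR U c d A B :=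
    mul_le_mul_of_nonneg_left hlower (by exact_mod_cast (by positivity : (0:ℝ) ≤ b / σ))
  calc (((b / σ) * z : ℝ) : EReal) = (((b / σ) : ℝ) : EReal) * ((z : ℝ) : EReal) :=
        EReal.coe_mul _ _
    _ = (((b / σ) : ℝ) : EReal) * Z := by rw [hcoeZ]
    _ ≤ (((b / σ) : ℝ) : EReal) * zAR U c d A B := h2

/-- For i.i.d. entries supported in `[0,b]` with mean `μ`, with probability
at least `1 - 1/m`, affine policies are a `b/(μ(1-ε))`-approximation of the adjustable
problem, where `ε = (b/μ)√(log m / n)`. -/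
theorem affine_approx_bounded_support {m n L : ℕ} (hm : 2 ≤ m) (hn : 1 ≤ n) (hL : 0 < L)
    (c : Fin n → ℝ) (A : Matrix (Fin m) (Fin n) ℝ)
    (R : Matrix (Fin L) (Fin m) ℝ) (r : Fin L → ℝ)
    (hc : 0 ≤ c) (hA : ∀ i j, 0 ≤ A i j) (hR : ∀ i j, 0 ≤ R i j) (hr : 0 ≤ r)
    (hU : (polyU R r).Nonempty) (hUbdd : Bornology.IsBounded (polyU R r))
    (b μ dbar : ℝ) (hb : 0 < b) (hμ : 0 < μ) (hμb : μ ≤ b) (hdbar : 0 < dbar)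
    (ε : ℝ) (hε : ε = (b / μ) * Real.sqrt (Real.log m / n)) (hε1 : ε < 1)
    {Ω : Type} [MeasurableSpace Ω] (Pr : Measure Ω) [IsProbabilityMeasure Pr]
    (Bt : Fin m → Fin n → Ω → ℝ)
    (hmeas : ∀ i j, Measurable (Bt i j))
    (hindep : iIndepFun
      (fun p : Fin m × Fin n => Bt p.1 p.2) Pr)
    (hident : ∀ i j i' j', IdentDistrib (Bt i j) (Bt i' j') Pr Pr)
    (hbdd : ∀ i j ω, Bt i j ω ∈ Set.Icc (0 : ℝ) b)
    (hmean : ∀ i j, ∫ ω, Bt i j ω ∂Pr = μ) :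
    ENNReal.ofReal (1 - 1 / m) ≤
      Pr {ω | zAR (polyU R r) c (fun _ => dbar) A (fun i j => Bt i j ω) ≤
              zAff (polyU R r) c (fun _ => dbar) A (fun i j => Bt i j ω) ∧
            zAff (polyU R r) c (fun _ => dbar) A (fun i j => Bt i j ω) ≤
              ((b / (μ * (1 - ε)) : ℝ) : EReal) *
                zAR (polyU R r) c (fun _ => dbar) A (fun i j => Bt i j ω)} := by
  -- setup
  have hm0 : 0 < m := lt_of_lt_of_le two_pos hm
  have hm1 : (1 : ℝ) ≤ (m : ℝ) := by exact_mod_cast Nat.one_le_of_lt hm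
  have hmR : (0 : ℝ) < (m : ℝ) := by linarith
  have hεnn : 0 ≤ ε := by
    rw [hε]
    have : 0 ≤ Real.log m := Real.log_nonneg hm1
    positivity
  set σ : ℝ := μ * (1 - ε) with hσdef
  have hσ : 0 < σ := by rw [hσdef]; nlinarith
  have hσb : σ ≤ b := by rw [hσdef]; nlinarith
  -- bad events
  set bad : Fin m → Set Ω := fun i => {ω | ∑ j, Bt i j ω ≤ (n : ℝ) * σ} with hbaddef
  have hmeasbad : ∀ i, MeasurableSet (bad i) := by
    intro i
    exact measurableSet_le (Finset.measurable_sum Finset.univ fun j _ => hmeas i j)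
      measurable_const
  have hPbad : ∀ i, Pr (bad i) ≤ ENNReal.ofReal (((m : ℝ) ^ 2)⁻¹) := by
    intro i
    have htail := aux_tail hm hn Pr Bt hmeas hindep hb hμ hbdd hmean hε i
    rw [← ENNReal.ofReal_toReal (measure_ne_top Pr (bad i))]
    exact ENNReal.ofReal_le_ofReal htail
  have hPU : Pr (⋃ i, bad i) ≤ ENNReal.ofReal (1 / (m : ℝ)) := by
    calc Pr (⋃ i, bad i) ≤ ∑' i : Fin m, Pr (bad i) := measure_iUnion_le _
      _ = ∑ i : Fin m, Pr (bad i) := tsum_fintype _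
      _ ≤ ∑ _i : Fin m, ENNReal.ofReal (((m : ℝ) ^ 2)⁻¹) :=
          Finset.sum_le_sum fun i _ => hPbad i
      _ = (m : ENNReal) * ENNReal.ofReal (((m : ℝ) ^ 2)⁻¹) := by
          rw [Finset.sum_const, Finset.card_univ, Fintype.card_fin, nsmul_eq_mul]
      _ = ENNReal.ofReal ((m : ℝ) * ((m : ℝ) ^ 2)⁻¹) := by
          rw [ENNReal.ofReal_mul (by positivity)]
          congr 1
          exact (ENNReal.ofReal_natCast m).symm
      _ = ENNReal.ofReal (1 / (m : ℝ)) := by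
          congr 1
          rw [sq]
          field_simp
  have hPE : ENNReal.ofReal (1 - 1 / (m : ℝ)) ≤ Pr ((⋃ i, bad i)ᶜ) := by
    rw [prob_compl_eq_one_sub (MeasurableSet.iUnion hmeasbad)]
    have h1 : ENNReal.ofReal (1 - 1 / (m : ℝ))
        = 1 - ENNReal.ofReal (1 / (m : ℝ)) := by
      rw [ENNReal.ofReal_sub _ (by positivity), ENNReal.ofReal_one]
    rw [h1]
    exact tsub_le_tsub_left hPU 1
  have hcast : ((m : ℕ) : ℝ) = (m : ℝ) := rfl
  refine le_trans hPE (measure_mono ?_)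
  intro ω hω
  simp only [Set.mem_compl_iff, Set.mem_iUnion, not_exists, hbaddef, Set.mem_setOf_eq] at hω
  have hrow : ∀ i, (n : ℝ) * σ ≤ ∑ j, Bt i j ω := fun i => (lt_of_not_ge (hω i)).le
  constructor
  · exact aux_zAR_le_zAff (polyU R r) c (fun _ => dbar) A (fun i j => Bt i j ω)
  · exact aux_det_main hm0 hn (polyU R r) hU hUbdd (fun h hh => hh.1) c hc A hA
      (fun i j => Bt i j ω) hb hσ hσb hdbar (fun i j => (hbdd i j ω).1)
      (fun i j => (hbdd i j ω).2) hrow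
end
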